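/- arXiv:2412.00040 — 4 statements merged into one kernel-verified Lean document; each statement's English description precedes it below -/
import Mathlib

section
/- Let n be a nonnegative integer, let v > −1 be a real number, and let x be a real number. Then ∑_{k=0}^{n} (−1)^{n−k} · C(n,k) · 2^{−k} · B(2k+v, (2k+v)/2) · B(k+v, v/2)^{−1} · (1−x)^{n−k} = ∑_{k=0}^{⌊n/2⌋} C(n, 2k) · 2^{−2k} · C(2k, k) · B((2k+v)/2, k)^{−1} · x^{n−2k}. -/
open Real

/-- Generalized binomial coefficient `B(a,b) = Γ(a+1)/(Γ(b+1)·Γ(a−b+1))`. -/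
noncomputable def gbinom (a b : ℝ) : ℝ :=
  Real.Gamma (a + 1) / (Real.Gamma (b + 1) * Real.Gamma (a - b + 1))


noncomputable def auxF (α : ℝ) (k : ℕ) : ℝ :=
  2 ^ k * Real.Gamma (k + α) / Real.Gamma (k + 2 * α)

noncomputable def auxS (α : ℝ) (m : ℕ) : ℝ :=
  ∑ k ∈ Finset.range (m + 1), (-1 : ℝ) ^ k * (m.choose k : ℝ) * auxF α k

lemma auxF_sub {α : ℝ} (hα : 0 < α) (k : ℕ) :
    auxF α k - auxF α (k + 1) =
      -(k : ℝ) * (2 ^ k * Real.Gamma (k + α) / Real.Gamma ((k : ℝ) + 2 * α + 1)) := by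
  have h1 : (0:ℝ) < (k:ℝ) + α := by positivity
  have h2 : (0:ℝ) < (k:ℝ) + 2*α := by positivity
  have hG2 := (Real.Gamma_pos_of_pos h2).ne'
  have hG3 : Real.Gamma ((k:ℝ) + 2*α + 1) ≠ 0 := by
    have : (0:ℝ) < (k:ℝ) + 2*α + 1 := by linarith
    exact (Real.Gamma_pos_of_pos this).ne'
  have e1 : Real.Gamma ((k:ℝ) + 1 + α) = ((k:ℝ)+α) * Real.Gamma ((k:ℝ)+α) := by
    rw [show (k:ℝ)+1+α = ((k:ℝ)+α)+1 by ring, Real.Gamma_add_one h1.ne']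
  have e2 : Real.Gamma ((k:ℝ) + 2*α + 1) = ((k:ℝ)+2*α) * Real.Gamma ((k:ℝ)+2*α) := by
    rw [Real.Gamma_add_one h2.ne']
  simp only [auxF]
  push_cast
  rw [show (k:ℝ)+1+2*α = (k:ℝ)+2*α+1 by ring, e1, e2]
  field_simp
  ring

lemma pascal_sum (m : ℕ) (g : ℕ → ℝ) :
    ∑ k ∈ Finset.range (m + 2), (-1:ℝ)^k * ((m+1).choose k : ℝ) * g k
    = ∑ k ∈ Finset.range (m + 1), (-1:ℝ)^k * (m.choose k : ℝ) * (g k - g (k+1)) := by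
  have hT : ∑ k ∈ Finset.range (m + 2), (-1:ℝ)^k * (m.choose k : ℝ) * g k
      = ∑ k ∈ Finset.range (m + 1), (-1:ℝ)^k * (m.choose k : ℝ) * g k := by
    rw [Finset.sum_range_succ, Nat.choose_succ_self]
    simp
  have h1 : ∑ k ∈ Finset.range (m + 2), (-1:ℝ)^k * (m.choose k : ℝ) * g k
      = (∑ k ∈ Finset.range (m + 1), (-1:ℝ)^(k+1) * (m.choose (k+1) : ℝ) * g (k+1)) + g 0 := by
    rw [Finset.sum_range_succ' (fun k => (-1:ℝ)^k * (m.choose k : ℝ) * g k)]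
    simp
  have h2 : ∑ k ∈ Finset.range (m + 2), (-1:ℝ)^k * ((m+1).choose k : ℝ) * g k
      = (∑ k ∈ Finset.range (m + 1), (-1:ℝ)^(k+1) * (((m.choose k : ℝ)) + (m.choose (k+1) : ℝ)) * g (k+1)) + g 0 := by
    rw [Finset.sum_range_succ' (fun k => (-1:ℝ)^k * ((m+1).choose k : ℝ) * g k)]
    simp [Nat.choose_succ_succ, Nat.cast_add]
  rw [h2]
  have h3 : ∀ k ∈ Finset.range (m+1),
      (-1:ℝ)^(k+1) * (((m.choose k : ℝ)) + (m.choose (k+1) : ℝ)) * g (k+1)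
      = (-(-1:ℝ)^k * (m.choose k : ℝ) * g (k+1)) + ((-1:ℝ)^(k+1) * (m.choose (k+1) : ℝ) * g (k+1)) := by
    intro k _; ring
  rw [Finset.sum_congr rfl h3, Finset.sum_add_distrib]
  have h4 : ∑ k ∈ Finset.range (m+1), (-1:ℝ)^(k+1) * (m.choose (k+1) : ℝ) * g (k+1)
      = (∑ k ∈ Finset.range (m + 1), (-1:ℝ)^k * (m.choose k : ℝ) * g k) - g 0 := by
    have := h1
    rw [hT] at this
    linarith [this]
  rw [h4]
  have h5 : ∑ k ∈ Finset.range (m+1), (-1:ℝ)^k * (m.choose k:ℝ) * (g k - g (k+1))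
      = (∑ k ∈ Finset.range (m+1), (-1:ℝ)^k * (m.choose k:ℝ) * g k)
        - ∑ k ∈ Finset.range (m+1), (-1:ℝ)^k * (m.choose k:ℝ) * g (k+1) := by
    rw [← Finset.sum_sub_distrib]; exact Finset.sum_congr rfl fun k _ => by ring
  have h6 : ∑ k ∈ Finset.range (m+1), -(-1:ℝ)^k * (m.choose k:ℝ) * g (k+1)
      = - ∑ k ∈ Finset.range (m+1), (-1:ℝ)^k * (m.choose k:ℝ) * g (k+1) := by
    rw [← Finset.sum_neg_distrib]; exact Finset.sum_congr rfl fun k _ => by ring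
  rw [h5, h6]; ring

lemma auxS_rec {α : ℝ} (hα : 0 < α) (m : ℕ) :
    auxS α (m + 2) = 2 * ((m:ℝ) + 1) * auxS (α + 1) m := by
  have h0 : auxS α (m + 2)
      = ∑ k ∈ Finset.range (m + 2), (-1:ℝ)^k * ((m+1).choose k : ℝ) * (auxF α k - auxF α (k+1)) := by
    rw [auxS, show m + 2 + 1 = (m + 1) + 2 by ring]
    exact pascal_sum (m+1) (auxF α)
  rw [h0]
  have h1 : ∀ k ∈ Finset.range (m + 2),
      (-1:ℝ)^k * ((m+1).choose k : ℝ) * (auxF α k - auxF α (k+1))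
      = (-1:ℝ)^k * ((m+1).choose k : ℝ) * (-(k : ℝ) * (2 ^ k * Real.Gamma (k + α) / Real.Gamma ((k:ℝ) + 2 * α + 1))) := by
    intro k _; rw [auxF_sub hα]
  rw [Finset.sum_congr rfl h1]
  rw [Finset.sum_range_succ' (fun k => (-1:ℝ)^k * ((m+1).choose k : ℝ) *
    (-(k : ℝ) * (2 ^ k * Real.Gamma (k + α) / Real.Gamma ((k:ℝ) + 2 * α + 1))))]
  simp only [Nat.cast_zero, neg_zero, zero_mul, mul_zero, add_zero, pow_zero, one_mul,
    Nat.cast_ofNat, Nat.choose_zero_right, Nat.cast_one]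
  rw [auxS, Finset.mul_sum]
  apply Finset.sum_congr rfl
  intro k hk
  have hch : ((m+1) : ℝ) * (m.choose k : ℝ) = ((m+1).choose (k+1) : ℝ) * ((k:ℝ) + 1) := by
    have := Nat.add_one_mul_choose_eq m k
    have := congrArg (Nat.cast (R := ℝ)) this
    push_cast at this
    linarith [this]
  have harg1 : ((k:ℕ)+1 : ℕ) = k + 1 := rfl
  have e1 : (((k+1:ℕ)):ℝ) = (k:ℝ) + 1 := by push_cast; ring
  rw [e1]
  have e2 : ((k:ℝ) + 1) + α = (k:ℝ) + (α + 1) := by ring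
  have e3 : ((k:ℝ) + 1) + 2*α + 1 = (k:ℝ) + 2*(α+1) := by ring
  rw [e2, e3, auxF]
  push_cast
  have hG : Real.Gamma ((k:ℝ) + 2*(α+1)) ≠ 0 := by
    have : (0:ℝ) < (k:ℝ) + 2*(α+1) := by positivity
    exact (Real.Gamma_pos_of_pos this).ne'
  field_simp
  linear_combination (-(2:ℝ) * 2^k * (-1:ℝ)^k) * hch

lemma auxS_one {α : ℝ} (hα : 0 < α) : auxS α 1 = 0 := by
  have h := auxF_sub hα 0
  norm_num at h
  simp only [auxS, Finset.sum_range_succ, Finset.sum_range_zero]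
  norm_num
  linarith [h]

lemma auxS_odd {α : ℝ} (hα : 0 < α) (j : ℕ) : auxS α (2 * j + 1) = 0 := by
  induction j generalizing α with
  | zero => simpa using auxS_one hα
  | succ j ih =>
      have h : 2 * (j + 1) + 1 = (2 * j + 1) + 2 := by ring
      rw [h, auxS_rec hα, ih (by linarith), mul_zero]

lemma auxS_even {α : ℝ} (hα : 0 < α) (j : ℕ) :
    auxS α (2 * j) = (Nat.factorial (2*j) : ℝ) / (Nat.factorial j : ℝ)
      * Real.Gamma (α + j) / Real.Gamma (2 * α + 2 * j) := by
  induction j generalizing α with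
  | zero => simp [auxS, auxF, Nat.factorial]
  | succ j ih =>
      have h2 : 2 * (j + 1) = 2 * j + 2 := by ring
      rw [h2, auxS_rec hα, ih (by linarith)]
      have hf1 : (Nat.factorial (2*j+2) : ℝ) = (2*(j:ℝ)+2) * (2*(j:ℝ)+1) * (Nat.factorial (2*j) : ℝ) := by
        rw [show 2*j+2 = (2*j+1) + 1 by omega, Nat.factorial_succ, Nat.factorial_succ]
        push_cast; ring
      have hf2 : (Nat.factorial (j+1) : ℝ) = ((j:ℝ)+1) * (Nat.factorial j : ℝ) := by
        rw [Nat.factorial_succ]; push_cast; ring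
      push_cast
      rw [hf1, hf2]
      rw [show (α + 1) + (j:ℝ) = α + ((j:ℝ)+1) by ring,
          show 2 * (α + 1) + 2 * (j:ℝ) = 2*α + 2*((j:ℝ)+1) by ring]
      have hj1 : ((j:ℝ)+1) ≠ 0 := by positivity
      have hfj : (Nat.factorial j : ℝ) ≠ 0 := by positivity
      have hGpos : (0:ℝ) < 2*α + 2*((j:ℝ)+1) := by positivity
      have hG : Real.Gamma (2*α + 2*((j:ℝ)+1)) ≠ 0 := (Real.Gamma_pos_of_pos hGpos).ne'
      field_simp


lemma coefL {v : ℝ} (hv : v > -1) (k : ℕ) :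
    (2 : ℝ) ^ (-(k : ℝ)) * gbinom (2 * (k : ℝ) + v) ((2 * (k : ℝ) + v) / 2) *
      (gbinom ((k : ℝ) + v) (v / 2))⁻¹
    = (2:ℝ)^v * Real.Gamma (v/2+1) / √π * auxF ((v+1)/2) k := by
  have ht : (0:ℝ) < (k:ℝ) + (v+1)/2 := by
    have : (0:ℝ) ≤ (k:ℝ) := Nat.cast_nonneg k
    linarith
  have ht2 : (0:ℝ) < (k:ℝ) + (v+1)/2 + 1/2 := by linarith
  have hv2 : (0:ℝ) < v/2 + 1 := by linarith
  have hkv : (0:ℝ) < (k:ℝ) + 2*((v+1)/2) := by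
    have : (0:ℝ) ≤ (k:ℝ) := Nat.cast_nonneg k
    linarith
  have hG1 := (Real.Gamma_pos_of_pos ht).ne'
  have hG2 := (Real.Gamma_pos_of_pos ht2).ne'
  have hG3 := (Real.Gamma_pos_of_pos hv2).ne'
  have hG4 := (Real.Gamma_pos_of_pos hkv).ne'
  have hπ : (0:ℝ) < √π := Real.sqrt_pos.mpr Real.pi_pos
  have hdup := Real.Gamma_mul_Gamma_add_half ((k:ℝ) + (v+1)/2)
  have h2pow : (0:ℝ) < (2:ℝ)^((1:ℝ)-2*((k:ℝ)+(v+1)/2)) := Real.rpow_pos_of_pos two_pos _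
  have hΓ2 : Real.Gamma (2*((k:ℝ)+(v+1)/2))
      = Real.Gamma ((k:ℝ)+(v+1)/2) * Real.Gamma (((k:ℝ)+(v+1)/2)+1/2)
        / ((2:ℝ)^((1:ℝ)-2*((k:ℝ)+(v+1)/2)) * √π) := by
    rw [eq_div_iff (by positivity)]
    linear_combination -hdup
  have hp1 : (2:ℝ)^((1:ℝ)-2*((k:ℝ)+(v+1)/2)) = (((2:ℝ)^(2*k) : ℝ))⁻¹ * ((2:ℝ)^v)⁻¹ := by
    rw [show (1:ℝ)-2*((k:ℝ)+(v+1)/2) = (-((2*k:ℕ):ℝ)) + (-v) by push_cast; ring,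
        Real.rpow_add (by norm_num : (0:ℝ) < 2), Real.rpow_neg (by norm_num : (0:ℝ) ≤ 2),
        Real.rpow_neg (by norm_num : (0:ℝ) ≤ 2), Real.rpow_natCast]
  have hpk : (2:ℝ)^(-(k:ℝ)) = ((2:ℝ)^(k:ℕ))⁻¹ := by
    rw [Real.rpow_neg (by norm_num : (0:ℝ) ≤ 2), Real.rpow_natCast]
  have h2v : (0:ℝ) < (2:ℝ)^v := Real.rpow_pos_of_pos two_pos v
  simp only [gbinom, auxF]
  rw [show 2*(k:ℝ)+v+1 = 2*((k:ℝ)+(v+1)/2) by ring,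
      show (2*(k:ℝ)+v)/2+1 = ((k:ℝ)+(v+1)/2)+1/2 by ring,
      show 2*(k:ℝ)+v - (2*(k:ℝ)+v)/2 + 1 = ((k:ℝ)+(v+1)/2)+1/2 by ring,
      show (k:ℝ)+v+1 = (k:ℝ)+2*((v+1)/2) by ring,
      show (k:ℝ)+v - v/2 + 1 = ((k:ℝ)+(v+1)/2)+1/2 by ring,
      hΓ2, hp1, hpk]
  have hpow2k : ((2:ℝ)^(2*k) : ℝ) = (2:ℝ)^k * (2:ℝ)^k := by
    rw [two_mul, pow_add]
  rw [hpow2k]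
  have h2k : ((2:ℝ)^(k:ℕ)) ≠ 0 := by positivity
  set A := Real.Gamma ((k:ℝ)+(v+1)/2) with hA
  set B := Real.Gamma ((k:ℝ)+(v+1)/2+1/2) with hB
  set C := Real.Gamma (v/2+1) with hC
  set D := Real.Gamma ((k:ℝ)+2*((v+1)/2)) with hD
  set P := √π with hP
  set E := (2:ℝ)^v with hE
  have hE0 : E ≠ 0 := ne_of_gt h2v
  have hP0 : P ≠ 0 := ne_of_gt hπ
  field_simp

lemma coefR {v : ℝ} (hv : v > -1) (j : ℕ) :
    (2:ℝ)^(-2*(j:ℝ)) * (((2*j).choose j : ℕ) : ℝ) * (gbinom ((2*(j:ℝ)+v)/2) (j:ℝ))⁻¹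
      = (2:ℝ)^v * Real.Gamma (v/2+1) / √π * auxS ((v+1)/2) (2*j) := by
  have hα : (0:ℝ) < (v+1)/2 := by linarith
  rw [auxS_even hα j]
  have ht : (0:ℝ) < (j:ℝ) + (v+1)/2 := by
    have : (0:ℝ) ≤ (j:ℝ) := Nat.cast_nonneg j
    linarith
  have ht2 : (0:ℝ) < (j:ℝ) + (v+1)/2 + 1/2 := by linarith
  have hv2 : (0:ℝ) < v/2 + 1 := by linarith
  have hG1 := (Real.Gamma_pos_of_pos ht).ne'
  have hG2 := (Real.Gamma_pos_of_pos ht2).ne'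
  have hG3 := (Real.Gamma_pos_of_pos hv2).ne'
  have hπ : (0:ℝ) < √π := Real.sqrt_pos.mpr Real.pi_pos
  have hdup := Real.Gamma_mul_Gamma_add_half ((j:ℝ) + (v+1)/2)
  have hΓ2 : Real.Gamma (2*((j:ℝ)+(v+1)/2))
      = Real.Gamma ((j:ℝ)+(v+1)/2) * Real.Gamma (((j:ℝ)+(v+1)/2)+1/2)
        / ((2:ℝ)^((1:ℝ)-2*((j:ℝ)+(v+1)/2)) * √π) := by
    rw [eq_div_iff (by positivity)]
    linear_combination -hdup
  have hp1 : (2:ℝ)^((1:ℝ)-2*((j:ℝ)+(v+1)/2)) = (((2:ℝ)^(2*j) : ℝ))⁻¹ * ((2:ℝ)^v)⁻¹ := by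
    rw [show (1:ℝ)-2*((j:ℝ)+(v+1)/2) = (-((2*j:ℕ):ℝ)) + (-v) by push_cast; ring,
        Real.rpow_add (by norm_num : (0:ℝ) < 2), Real.rpow_neg (by norm_num : (0:ℝ) ≤ 2),
        Real.rpow_neg (by norm_num : (0:ℝ) ≤ 2), Real.rpow_natCast]
  have hpk : (2:ℝ)^(-2*(j:ℝ)) = ((2:ℝ)^(2*j:ℕ))⁻¹ := by
    rw [show -2*(j:ℝ) = -((2*j:ℕ):ℝ) by push_cast; ring,
        Real.rpow_neg (by norm_num : (0:ℝ) ≤ 2), Real.rpow_natCast]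
  have hΓj : Real.Gamma ((j:ℝ)+1) = (Nat.factorial j : ℝ) := Real.Gamma_nat_eq_factorial j
  have hcf : (((2*j).choose j : ℕ) : ℝ) * (Nat.factorial j : ℝ) * (Nat.factorial j : ℝ)
      = (Nat.factorial (2*j) : ℝ) := by
    have := Nat.choose_mul_factorial_mul_factorial (show j ≤ 2*j by omega)
    have := congrArg (Nat.cast (R := ℝ)) this
    push_cast at this
    rw [show 2*j - j = j by omega] at this
    push_cast at this
    linarith [this]
  simp only [gbinom]
  rw [show (2*(j:ℝ)+v)/2+1 = ((j:ℝ)+(v+1)/2)+1/2 by ring,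
      show (2*(j:ℝ)+v)/2 - (j:ℝ) + 1 = v/2+1 by ring,
      show 2*((v+1)/2) + 2*(j:ℝ) = 2*((j:ℝ)+(v+1)/2) by ring,
      show (v+1)/2 + (j:ℝ) = (j:ℝ)+(v+1)/2 by ring,
      hΓ2, hp1, hpk, hΓj]
  have h2v : (0:ℝ) < (2:ℝ)^v := Real.rpow_pos_of_pos two_pos v
  have hfj : (Nat.factorial j : ℝ) ≠ 0 := by positivity
  have h2j : ((2:ℝ)^(2*j:ℕ)) ≠ 0 := by positivity
  set A := Real.Gamma ((j:ℝ)+(v+1)/2) with hA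
  set B := Real.Gamma ((j:ℝ)+(v+1)/2+1/2) with hB
  set C := Real.Gamma (v/2+1) with hC
  set P := √π with hP
  set E := (2:ℝ)^v with hE
  have hE0 : E ≠ 0 := ne_of_gt h2v
  have hP0 : P ≠ 0 := ne_of_gt hπ
  field_simp
  linear_combination hcf

lemma chooseswap (n k i : ℕ) : n.choose k * (n-k).choose i = n.choose i * (n-i).choose k := by
  by_cases h : k + i ≤ n
  · have h1 : n.choose (k+i) * (k+i).choose k = n.choose k * (n-k).choose (k+i-k) :=
      Nat.choose_mul (Nat.le_add_right k i)
    have h2 : n.choose (k+i) * (k+i).choose i = n.choose i * (n-i).choose (k+i-i) :=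
      Nat.choose_mul (Nat.le_add_left i k)
    rw [Nat.add_sub_cancel_left] at h1
    rw [Nat.add_sub_cancel] at h2
    calc n.choose k * (n-k).choose i = n.choose (k+i) * (k+i).choose k := h1.symm
      _ = n.choose (k+i) * (k+i).choose i := by rw [Nat.choose_symm_add]
      _ = n.choose i * (n-i).choose k := h2
  · push_neg at h
    rcases le_or_gt k n with hkn | hkn
    · rcases le_or_gt i n with hin | hin
      · rw [Nat.choose_eq_zero_of_lt (show n-k < i by omega),
            Nat.choose_eq_zero_of_lt (show n-i < k by omega)]
        simp
      · rw [Nat.choose_eq_zero_of_lt (show n-k < i by omega),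
            Nat.choose_eq_zero_of_lt hin]
        simp
    · rcases le_or_gt i n with hin | hin
      · rw [Nat.choose_eq_zero_of_lt hkn, Nat.choose_eq_zero_of_lt (show n-i < k by omega)]
        simp
      · rw [Nat.choose_eq_zero_of_lt hkn, Nat.choose_eq_zero_of_lt hin]
        simp

lemma neg_one_pow_sub (n k : ℕ) (h : k ≤ n) : (-1:ℝ)^(n-k) = (-1:ℝ)^n * (-1:ℝ)^k := by
  calc (-1:ℝ)^(n-k) = (-1:ℝ)^(n-k) * ((-1:ℝ)^k*(-1:ℝ)^k) := by
        rw [← pow_add, ← two_mul, pow_mul]; norm_num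
    _ = ((-1:ℝ)^(n-k)*(-1:ℝ)^k)*(-1:ℝ)^k := by ring
    _ = (-1:ℝ)^n * (-1:ℝ)^k := by rw [← pow_add, Nat.sub_add_cancel h]

lemma sum_even_terms (n : ℕ) (g : ℕ → ℝ) (h : ∀ m, Odd m → g m = 0) :
    ∑ m ∈ Finset.range (n+1), g m = ∑ j ∈ Finset.range (n/2+1), g (2*j) := by
  have h1 : ∑ m ∈ Finset.range (n+1), g m
      = ∑ m ∈ (Finset.range (n+1)).filter (fun m => Even m), g m := by
    symm; apply Finset.sum_filter_of_ne
    intro m _ hm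
    rcases Nat.even_or_odd m with he | ho
    · exact he
    · exact absurd (h m ho) hm
  have h2 : (Finset.range (n+1)).filter (fun m => Even m)
      = (Finset.range (n/2+1)).image (fun j => 2*j) := by
    ext m
    simp only [Finset.mem_filter, Finset.mem_range, Finset.mem_image, Nat.lt_succ_iff,
      Nat.even_iff]
    constructor
    · rintro ⟨hm, he⟩; exact ⟨m/2, by omega, by omega⟩
    · rintro ⟨j, hj, rfl⟩; omega
  rw [h1, h2, Finset.sum_image]
  intro a _ b _ hab; simp only at hab; omega

theorem polynomial_identity_central_binom (n : ℕ) (v : ℝ) (hv : v > -1) (x : ℝ) :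
    ∑ k ∈ Finset.range (n + 1),
      (-1 : ℝ) ^ (n - k) * (n.choose k : ℝ) * (2 : ℝ) ^ (-(k : ℝ)) *
        gbinom (2 * (k : ℝ) + v) ((2 * (k : ℝ) + v) / 2) *
        (gbinom ((k : ℝ) + v) (v / 2))⁻¹ * (1 - x) ^ (n - k)
    = ∑ k ∈ Finset.range (n / 2 + 1),
        (n.choose (2 * k) : ℝ) * (2 : ℝ) ^ (-2 * (k : ℝ)) * ((2 * k).choose k : ℝ) *
          (gbinom ((2 * (k : ℝ) + v) / 2) (k : ℝ))⁻¹ * x ^ (n - 2 * k) := by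
  have hα : (0:ℝ) < (v+1)/2 := by linarith
  set K : ℝ := (2:ℝ)^v * Real.Gamma (v/2+1) / √π with hK
  have expand : ∀ k : ℕ, k ≤ n →
      ((1:ℝ) - x)^(n-k) = ∑ i ∈ Finset.range (n+1), ((n-k).choose i : ℝ) * (-x)^i := by
    intro k hk
    rw [show (1:ℝ) - x = -x + 1 by ring, add_pow]
    calc (∑ i ∈ Finset.range (n-k+1), (-x)^i * (1:ℝ)^(n-k-i) * ((n-k).choose i:ℝ))
        = ∑ i ∈ Finset.range (n-k+1), ((n-k).choose i : ℝ) * (-x)^i :=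
          Finset.sum_congr rfl fun i _ => by ring
      _ = ∑ i ∈ Finset.range (n+1), ((n-k).choose i : ℝ) * (-x)^i := by
          apply Finset.sum_subset (Finset.range_subset_range.mpr (by omega))
          intro i hi hni
          have hlt : n - k < i := by
            simp only [Finset.mem_range] at hi hni; omega
          rw [Nat.choose_eq_zero_of_lt hlt]; simp
  have step1 :
      (∑ k ∈ Finset.range (n + 1),
        (-1 : ℝ) ^ (n - k) * (n.choose k : ℝ) * (2 : ℝ) ^ (-(k : ℝ)) *
          gbinom (2 * (k : ℝ) + v) ((2 * (k : ℝ) + v) / 2) *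
          (gbinom ((k : ℝ) + v) (v / 2))⁻¹ * (1 - x) ^ (n - k))
      = ∑ k ∈ Finset.range (n+1), ∑ i ∈ Finset.range (n+1),
          ((-1:ℝ)^n * (-1:ℝ)^k * (n.choose k : ℝ) * K * auxF ((v+1)/2) k)
            * (((n-k).choose i : ℝ) * (-x)^i) := by
    apply Finset.sum_congr rfl
    intro k hk
    have hk' : k ≤ n := by simpa [Nat.lt_succ_iff] using hk
    calc (-1:ℝ)^(n-k) * (n.choose k:ℝ) * (2:ℝ)^(-(k:ℝ)) *
            gbinom (2*(k:ℝ)+v) ((2*(k:ℝ)+v)/2) * (gbinom ((k:ℝ)+v) (v/2))⁻¹ * (1-x)^(n-k)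
        = ((-1:ℝ)^(n-k) * (n.choose k:ℝ)) *
            ((2:ℝ)^(-(k:ℝ)) * gbinom (2*(k:ℝ)+v) ((2*(k:ℝ)+v)/2) * (gbinom ((k:ℝ)+v) (v/2))⁻¹) *
            (1-x)^(n-k) := by ring
      _ = ((-1:ℝ)^n * (-1:ℝ)^k * (n.choose k:ℝ)) * (K * auxF ((v+1)/2) k) *
            ∑ i ∈ Finset.range (n+1), ((n-k).choose i : ℝ) * (-x)^i := by
          rw [coefL hv k, neg_one_pow_sub n k hk', expand k hk', hK]
      _ = ∑ i ∈ Finset.range (n+1),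
            ((-1:ℝ)^n * (-1:ℝ)^k * (n.choose k:ℝ) * K * auxF ((v+1)/2) k)
              * (((n-k).choose i : ℝ) * (-x)^i) := by
          rw [Finset.mul_sum]
          exact Finset.sum_congr rfl fun i _ => by ring
  rw [step1, Finset.sum_comm]
  have inner : ∀ i ∈ Finset.range (n+1),
      (∑ k ∈ Finset.range (n+1),
        ((-1:ℝ)^n * (-1:ℝ)^k * (n.choose k : ℝ) * K * auxF ((v+1)/2) k)
          * (((n-k).choose i : ℝ) * (-x)^i))
      = ((-1:ℝ)^n * (n.choose i : ℝ) * K * (-x)^i) * auxS ((v+1)/2) (n-i) := by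
    intro i hi
    calc (∑ k ∈ Finset.range (n+1),
          ((-1:ℝ)^n * (-1:ℝ)^k * (n.choose k : ℝ) * K * auxF ((v+1)/2) k)
            * (((n-k).choose i : ℝ) * (-x)^i))
        = ∑ k ∈ Finset.range (n+1), ((-1:ℝ)^n * (n.choose i : ℝ) * K * (-x)^i) *
            ((-1:ℝ)^k * (((n-i).choose k : ℝ)) * auxF ((v+1)/2) k) := by
          apply Finset.sum_congr rfl
          intro k _
          have hcs : ((n.choose k : ℝ)) * (((n-k).choose i:ℝ))
              = (n.choose i : ℝ) * (((n-i).choose k:ℝ)) := by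
            exact_mod_cast congrArg (Nat.cast (R:=ℝ)) (chooseswap n k i)
          linear_combination
            ((-1:ℝ)^n * (-1:ℝ)^k * K * auxF ((v+1)/2) k * (-x)^i) * hcs
      _ = ((-1:ℝ)^n * (n.choose i : ℝ) * K * (-x)^i) *
            ∑ k ∈ Finset.range (n+1), (-1:ℝ)^k * ((n-i).choose k : ℝ) * auxF ((v+1)/2) k := by
          rw [Finset.mul_sum]
      _ = ((-1:ℝ)^n * (n.choose i : ℝ) * K * (-x)^i) *
            ∑ k ∈ Finset.range ((n-i)+1), (-1:ℝ)^k * ((n-i).choose k : ℝ) * auxF ((v+1)/2) k := by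
          congr 1
          refine (Finset.sum_subset (Finset.range_subset_range.mpr (by omega)) ?_).symm
          intro k hk1 hk2
          have hlt : n - i < k := by simp only [Finset.mem_range] at hk1 hk2; omega
          rw [Nat.choose_eq_zero_of_lt hlt]; simp
      _ = ((-1:ℝ)^n * (n.choose i : ℝ) * K * (-x)^i) * auxS ((v+1)/2) (n-i) := rfl
  rw [Finset.sum_congr rfl inner]
  rw [← Finset.sum_range_reflect (fun i => ((-1:ℝ)^n * (n.choose i : ℝ) * K * (-x)^i) * auxS ((v+1)/2) (n-i)) (n+1)]
  have refl_term : ∀ m ∈ Finset.range (n+1),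
      ((-1:ℝ)^n * (n.choose (n+1-1-m) : ℝ) * K * (-x)^(n+1-1-m)) * auxS ((v+1)/2) (n-(n+1-1-m))
      = (-1:ℝ)^m * (n.choose m : ℝ) * K * x^(n-m) * auxS ((v+1)/2) m := by
    intro m hm
    have hm' : m ≤ n := by simpa [Nat.lt_succ_iff] using hm
    have e0 : n + 1 - 1 - m = n - m := by omega
    have e1 : n - (n - m) = m := Nat.sub_sub_self hm'
    have e2 : (n.choose (n-m) : ℝ) = (n.choose m : ℝ) := by
      exact_mod_cast congrArg (Nat.cast (R:=ℝ)) (Nat.choose_symm hm')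
    have e3 : ((-x):ℝ)^(n-m) = (-1:ℝ)^(n-m) * x^(n-m) := by rw [neg_pow]
    have e4 : (-1:ℝ)^n * (-1:ℝ)^(n-m) = (-1:ℝ)^m := by
      rw [neg_one_pow_sub n m hm']
      calc (-1:ℝ)^n * ((-1:ℝ)^n * (-1:ℝ)^m) = ((-1:ℝ)^n * (-1:ℝ)^n) * (-1:ℝ)^m := by ring
        _ = (-1:ℝ)^m := by rw [← pow_add, ← two_mul, pow_mul]; norm_num
    rw [e0, e1, e2, e3]
    calc ((-1:ℝ)^n * (n.choose m : ℝ) * K * ((-1:ℝ)^(n-m) * x^(n-m))) * auxS ((v+1)/2) m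
        = ((-1:ℝ)^n * (-1:ℝ)^(n-m)) * (n.choose m : ℝ) * K * x^(n-m) * auxS ((v+1)/2) m := by
          ring
      _ = (-1:ℝ)^m * (n.choose m : ℝ) * K * x^(n-m) * auxS ((v+1)/2) m := by rw [e4]
  rw [Finset.sum_congr rfl refl_term]
  rw [sum_even_terms n (fun m => (-1:ℝ)^m * (n.choose m : ℝ) * K * x^(n-m) * auxS ((v+1)/2) m)
    (by
      intro m hm
      obtain ⟨j, rfl⟩ := hm
      show (-1:ℝ)^(2*j+1) * (n.choose (2*j+1) : ℝ) * K * x^(n-(2*j+1)) * auxS ((v+1)/2) (2*j+1) = 0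
      rw [auxS_odd hα j]
      ring)]
  apply Finset.sum_congr rfl
  intro j _
  have hsq : (-1:ℝ)^(2*j) = 1 := by rw [pow_mul]; norm_num
  calc (-1:ℝ)^(2*j) * (n.choose (2*j) : ℝ) * K * x^(n-2*j) * auxS ((v+1)/2) (2*j)
      = (n.choose (2*j) : ℝ) * (K * auxS ((v+1)/2) (2*j)) * x^(n-2*j) := by rw [hsq]; ring
    _ = (n.choose (2*j) : ℝ) * ((2:ℝ)^(-2*(j:ℝ)) * (((2*j).choose j : ℕ) : ℝ) *
          (gbinom ((2*(j:ℝ)+v)/2) (j:ℝ))⁻¹) * x^(n-2*j) := by rw [coefR hv j, hK]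
    _ = (n.choose (2*j) : ℝ) * (2:ℝ)^(-2*(j:ℝ)) * (((2*j).choose j : ℕ) : ℝ) *
          (gbinom ((2*(j:ℝ)+v)/2) (j:ℝ))⁻¹ * x^(n-2*j) := by ring
end

section
/- Let n be a nonnegative integer, let v > −1 be a real number, and let x be a real number. Then ∑_{k=0}^{n} C(n,k) · 2^{−k} · B(2k+v, (2k+v)/2) · B(k+v, v/2)^{−1} · (1−x)^k · x^{n−k} = ∑_{k=0}^{⌊n/2⌋} C(n, 2k) · 2^{−2k} · C(2k, k) · B((2k+v)/2, k)^{−1} · (1−x)^{2k}. -/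
open Real

section Aux
open Finset

/-- Normalized even moments of the weight `(1-t^2)^((v-1)/2)` on `[-1,1]`,
defined by their recursion. -/
noncomputable def pimu (v : ℝ) : ℕ → ℝ
  | 0 => 1
  | 1 => 0
  | (i+2) => (i+1)/(v+i+2) * pimu v i

/-- The coefficient `2^k ((v+1)/2)_k / (v+1)_k`, defined by its recursion. -/
noncomputable def pic (v : ℝ) : ℕ → ℝ
  | 0 => 1
  | (k+1) => pic v k * (v+1+2*k)/(v+1+k)

/-- Binomial transforms of shifted moments. -/
noncomputable def piF (v : ℝ) (r k : ℕ) : ℝ :=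
  ∑ i ∈ range (k+1), (k.choose i : ℝ) * pimu v (i+r)

lemma pimu0 (v : ℝ) : pimu v 0 = 1 := rfl
lemma pimu1 (v : ℝ) : pimu v 1 = 0 := rfl
lemma pimu2 (v : ℝ) : pimu v 2 = 1/(v+2) := by
  show ((0:ℕ)+1)/(v+(0:ℕ)+2) * pimu v 0 = 1/(v+2)
  rw [show pimu v 0 = 1 from rfl]; push_cast; ring

lemma pimu_odd (v : ℝ) (j : ℕ) : pimu v (2*j+1) = 0 := by
  induction j with
  | zero => rfl
  | succ p ih =>
    have h : 2*(p+1)+1 = (2*p+1)+2 := by omega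
    rw [h]
    show (((2*p+1:ℕ):ℝ)+1)/(v+((2*p+1:ℕ):ℝ)+2) * pimu v (2*p+1) = 0
    rw [ih, mul_zero]

lemma piL3 (v : ℝ) (hv : v > -1) (i : ℕ) : (v+i+2) * pimu v (i+2) = (i+1) * pimu v i := by
  have h0 : (0:ℝ) ≤ i := Nat.cast_nonneg i
  have h : v + i + 2 ≠ 0 := by intro hc; linarith
  show (v+i+2) * ((i+1)/(v+i+2) * pimu v i) = (i+1) * pimu v i
  field_simp

lemma piL1 (v : ℝ) (r k : ℕ) : piF v r (k+1) = piF v r k + piF v (r+1) k := by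
  unfold piF
  rw [Finset.sum_range_succ' (fun i => ((k+1).choose i : ℝ) * pimu v (i+r)) (k+1)]
  have h1 : ∀ i, (((k+1).choose (i+1) : ℕ) : ℝ) = (k.choose i : ℝ) + (k.choose (i+1) : ℝ) := by
    intro i; rw [Nat.choose_succ_succ]; push_cast; ring
  simp only [h1]
  have h2 : ∑ i ∈ range (k+1), ((k.choose i : ℝ) + (k.choose (i+1) : ℝ)) * pimu v (i+1+r)
      = (∑ i ∈ range (k+1), (k.choose i : ℝ) * pimu v (i+(r+1)))
        + ∑ i ∈ range (k+1), (k.choose (i+1) : ℝ) * pimu v (i+1+r) := by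
    rw [← Finset.sum_add_distrib]
    congr 1; ext i; have : i+1+r = i+(r+1) := by ring
    rw [this]; ring
  rw [h2]
  have h3 : (∑ i ∈ range (k+1), (k.choose (i+1) : ℝ) * pimu v (i+1+r))
        + (k.choose 0 : ℝ) * pimu v (0+r)
      = ∑ i ∈ range (k+2), (k.choose i : ℝ) * pimu v (i+r) := by
    rw [Finset.sum_range_succ' (fun i => (k.choose i : ℝ) * pimu v (i+r)) (k+1)]
  have h4 : ∑ i ∈ range (k+2), (k.choose i : ℝ) * pimu v (i+r)
      = ∑ i ∈ range (k+1), (k.choose i : ℝ) * pimu v (i+r) := by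
    rw [Finset.sum_range_succ]; simp
  simp only [Nat.choose_zero_right, Nat.cast_one, one_mul] at h3 ⊢
  linarith [h3, h4]

lemma piL2 (v : ℝ) (r k : ℕ) :
    ∑ i ∈ range (k+2), (i : ℝ) * ((k+1).choose i : ℝ) * pimu v (i+r)
      = (k+1) * piF v (r+1) k := by
  rw [Finset.sum_range_succ' (fun i => (i : ℝ) * ((k+1).choose i : ℝ) * pimu v (i+r)) (k+1)]
  have h1 : ∀ i : ℕ, ((i:ℝ)+1) * ((k+1).choose (i+1) : ℝ) = ((k:ℝ)+1) * (k.choose i : ℝ) := by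
    intro i
    have h := congrArg (fun m : ℕ => (m : ℝ)) (Nat.add_one_mul_choose_eq k i)
    push_cast at h
    linarith [h]
  simp only [piF, Finset.mul_sum]
  rw [Nat.cast_zero, zero_mul, zero_mul, add_zero]
  apply Finset.sum_congr rfl
  intro i _
  have e : i+1+r = i+(r+1) := by ring
  rw [e]
  push_cast
  rw [← mul_assoc ((k:ℝ)+1), ← h1 i]

lemma piL4 (v : ℝ) (hv : v > -1) (k : ℕ) :
    (v+2) * piF v 2 (k+1) + ((k:ℝ)+1) * piF v 3 k
      = piF v 0 (k+1) + ((k:ℝ)+1) * piF v 1 k := by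
  have key : ∑ i ∈ range (k+2), ((k+1).choose i : ℝ) * ((v+i+2) * pimu v (i+2))
      = ∑ i ∈ range (k+2), ((k+1).choose i : ℝ) * (((i:ℝ)+1) * pimu v i) := by
    apply Finset.sum_congr rfl; intro i _; rw [piL3 v hv i]
  have lhs1 : ∑ i ∈ range (k+2), ((k+1).choose i : ℝ) * ((v+i+2) * pimu v (i+2))
      = (v+2) * piF v 2 (k+1) + ((k:ℝ)+1) * piF v 3 k := by
    have e : ∀ i ∈ range (k+2), ((k+1).choose i : ℝ) * ((v+i+2) * pimu v (i+2))
        = (v+2) * (((k+1).choose i : ℝ) * pimu v (i+2))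
          + (i:ℝ) * ((k+1).choose i : ℝ) * pimu v (i+2) := by
      intro i _; ring
    rw [Finset.sum_congr rfl e, Finset.sum_add_distrib, ← Finset.mul_sum]
    have h2 := piL2 v 2 k
    have h3 : piF v 2 (k+1) = ∑ i ∈ range (k+2), ((k+1).choose i : ℝ) * pimu v (i+2) := rfl
    rw [← h3, h2]
  have rhs1 : ∑ i ∈ range (k+2), ((k+1).choose i : ℝ) * (((i:ℝ)+1) * pimu v i)
      = piF v 0 (k+1) + ((k:ℝ)+1) * piF v 1 k := by
    have e : ∀ i ∈ range (k+2), ((k+1).choose i : ℝ) * (((i:ℝ)+1) * pimu v i)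
        = ((k+1).choose i : ℝ) * pimu v (i+0) + (i:ℝ) * ((k+1).choose i : ℝ) * pimu v (i+0) := by
      intro i _; rw [Nat.add_zero]; ring
    rw [Finset.sum_congr rfl e, Finset.sum_add_distrib]
    have h2 := piL2 v 0 k
    have h3 : piF v 0 (k+1) = ∑ i ∈ range (k+2), ((k+1).choose i : ℝ) * pimu v (i+0) := rfl
    rw [← h3, h2]
  rw [← lhs1, key, rhs1]

lemma piL5 (v : ℝ) (hv : v > -1) (k : ℕ) :
    (v+(k:ℝ)+3) * piF v 0 (k+3)
      = (2*v+3*(k:ℝ)+7) * piF v 0 (k+2) - (v+2*(k:ℝ)+3) * piF v 0 (k+1) := by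
  have a0 := piL1 v 0 k; have a1 := piL1 v 0 (k+1); have a2 := piL1 v 0 (k+2)
  have b0 := piL1 v 1 k; have b1 := piL1 v 1 (k+1)
  have c0 := piL1 v 2 k
  have d := piL4 v hv k
  push_cast at a1 a2 b1 ⊢
  nlinarith [a0, a1, a2, b0, b1, c0, d]

lemma piF0 (v : ℝ) : piF v 0 0 = 1 := by simp [piF, pimu0]
lemma piF1 (v : ℝ) : piF v 0 1 = 1 := by
  simp [piF, Finset.sum_range_succ, pimu0, pimu1]
lemma piF2 (v : ℝ) : piF v 0 2 = 1 + 1/(v+2) := by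
  simp [piF, Finset.sum_range_succ, pimu0, pimu1, pimu2]

lemma pic_succ (v : ℝ) (k : ℕ) : pic v (k+1) = pic v k * (v+1+2*k)/(v+1+k) := rfl
lemma pic0 (v : ℝ) : pic v 0 = 1 := rfl
lemma pic1 (v : ℝ) (hv : v > -1) : pic v 1 = 1 := by
  rw [pic_succ, pic0]; push_cast
  have h : v + 1 ≠ 0 := by intro h; linarith
  field_simp
  simp [h]
lemma pic2 (v : ℝ) (hv : v > -1) : pic v 2 = 1 + 1/(v+2) := by
  rw [pic_succ, pic1 v hv]; push_cast
  have h : v + 2 ≠ 0 := by intro h; linarith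
  have h2 : v + 1 + 1 ≠ 0 := by intro h; linarith
  field_simp
  ring

lemma pic_mul (v : ℝ) (hv : v > -1) (k : ℕ) :
    (v+1+(k:ℝ)) * pic v (k+1) = (v+1+2*(k:ℝ)) * pic v k := by
  have hk := Nat.cast_nonneg (α := ℝ) k
  have h : v + 1 + (k:ℝ) ≠ 0 := by intro h; linarith
  rw [pic_succ]
  field_simp

lemma pic_rec (v : ℝ) (hv : v > -1) (k : ℕ) :
    (v+(k:ℝ)+3) * pic v (k+3)
      = (2*v+3*(k:ℝ)+7) * pic v (k+2) - (v+2*(k:ℝ)+3) * pic v (k+1) := by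
  have e1 := pic_mul v hv (k+1)
  have e2 := pic_mul v hv (k+2)
  push_cast at e1 e2
  linear_combination e2 - e1

/-- The key binomial-transform identity: `∑ C(k,i) μ_i = c_k`. -/
lemma piKey (v : ℝ) (hv : v > -1) (k : ℕ) : piF v 0 k = pic v k := by
  have main : ∀ m : ℕ, piF v 0 (m+1) = pic v (m+1) ∧ piF v 0 (m+2) = pic v (m+2) := by
    intro m
    induction m with
    | zero => exact ⟨by rw [piF1, pic1 v hv], by rw [piF2, pic2 v hv]⟩
    | succ p ih =>
      refine ⟨ih.2, ?_⟩
      have h1 : v + (p:ℝ) + 3 ≠ 0 := by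
        have := Nat.cast_nonneg (α := ℝ) p; intro h; linarith
      have e1 := piL5 v hv p
      have e2 := pic_rec v hv p
      rw [ih.1, ih.2] at e1
      have h2 : (v+(p:ℝ)+3) * piF v 0 (p+3) = (v+(p:ℝ)+3) * pic v (p+3) := by rw [e1, e2]
      have h3 := mul_left_cancel₀ h1 h2
      convert h3 using 2 <;> push_cast <;> ring
  match k with
  | 0 => simp [piF, pic0, show pimu v 0 = 1 from rfl]
  | (m+1) => exact (main m).1

lemma innerSumLem (n i : ℕ) (hi : i ≤ n) (y : ℝ) :
    ∑ k ∈ range (n+1), (n.choose k : ℝ) * (k.choose i : ℝ) * y^k * (1-y)^(n-k)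
      = (n.choose i : ℝ) * y^i := by
  rw [Finset.range_eq_Ico, ← Finset.sum_Ico_consecutive _ (Nat.zero_le i) (by omega : i ≤ n+1)]
  have h0 : ∑ k ∈ Finset.Ico 0 i, (n.choose k : ℝ) * (k.choose i : ℝ) * y^k * (1-y)^(n-k) = 0 := by
    apply Finset.sum_eq_zero
    intro k hk
    rw [Finset.mem_Ico] at hk
    rw [Nat.choose_eq_zero_of_lt hk.2]
    simp
  rw [h0, zero_add, Finset.sum_Ico_eq_sum_range]
  have hlen : n + 1 - i = (n - i) + 1 := by omega
  rw [hlen]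
  have step : ∀ j ∈ range ((n-i)+1),
      (n.choose (i+j) : ℝ) * ((i+j).choose i : ℝ) * y^(i+j) * (1-y)^(n-(i+j))
      = (n.choose i : ℝ) * y^i * ((((n-i).choose j : ℝ)) * y^j * (1-y)^((n-i)-j)) := by
    intro j hj
    rw [Finset.mem_range] at hj
    have hij : i + j ≤ n := by omega
    have hc : n.choose (i+j) * (i+j).choose i = n.choose i * (n-i).choose j := by
      have := Nat.choose_mul (n := n) (k := i+j) (s := i) (Nat.le_add_right i j)
      simpa using this
    have hc' : (n.choose (i+j) : ℝ) * ((i+j).choose i : ℝ)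
        = (n.choose i : ℝ) * ((n-i).choose j : ℝ) := by
      exact_mod_cast congrArg (fun m : ℕ => (m:ℝ)) hc
    have hsub : n - (i+j) = (n-i) - j := by omega
    rw [hsub, pow_add]
    rw [show (n.choose (i+j) : ℝ) * ((i+j).choose i : ℝ) * (y^i*y^j) * (1-y)^((n-i)-j)
        = ((n.choose (i+j) : ℝ) * ((i+j).choose i : ℝ)) * (y^i*y^j) * (1-y)^((n-i)-j)
        from by ring, hc']
    ring
  rw [Finset.sum_congr rfl step, ← Finset.mul_sum]
  have h1 : ∑ j ∈ range ((n-i)+1), ((n-i).choose j : ℝ) * y^j * (1-y)^((n-i)-j) = 1 := by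
    have h2 := add_pow y (1-y) (n-i)
    simp only [add_sub_cancel] at h2
    rw [one_pow] at h2
    have hb : ∑ j ∈ range ((n-i)+1), ((n-i).choose j : ℝ) * y^j * (1-y)^((n-i)-j)
        = ∑ m ∈ range ((n-i)+1), y^m * (1-y)^((n-i)-m) * ((n-i).choose m : ℝ) := by
      apply Finset.sum_congr rfl; intro m _; ring
    rw [hb, ← h2]
  rw [h1, mul_one]

lemma swap_sum (v : ℝ) (hv : v > -1) (n : ℕ) (y : ℝ) :
    ∑ k ∈ range (n+1), (n.choose k : ℝ) * pic v k * y^k * (1-y)^(n-k)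
      = ∑ i ∈ range (n+1), (n.choose i : ℝ) * pimu v i * y^i := by
  have e1 : ∀ k ∈ range (n+1), (n.choose k : ℝ) * pic v k * y^k * (1-y)^(n-k)
      = ∑ i ∈ range (n+1), (n.choose k : ℝ) * (k.choose i : ℝ) * pimu v i * y^k * (1-y)^(n-k) := by
    intro k hk
    rw [Finset.mem_range] at hk
    have h : pic v k = ∑ i ∈ range (n+1), (k.choose i : ℝ) * pimu v i := by
      rw [← piKey v hv k]
      unfold piF
      rw [Finset.sum_subset (Finset.range_subset_range.2 (by omega : k+1 ≤ n+1))]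
      · apply Finset.sum_congr rfl; intro i _; rw [Nat.add_zero]
      · intro i _ hi
        rw [Finset.mem_range, not_lt] at hi
        rw [Nat.choose_eq_zero_of_lt (by omega)]
        simp
    rw [h, Finset.mul_sum, Finset.sum_mul, Finset.sum_mul]
    apply Finset.sum_congr rfl
    intro i _; ring
  rw [Finset.sum_congr rfl e1, Finset.sum_comm]
  apply Finset.sum_congr rfl
  intro i hi
  rw [Finset.mem_range] at hi
  have e2 : ∀ k ∈ range (n+1), (n.choose k : ℝ) * (k.choose i : ℝ) * pimu v i * y^k * (1-y)^(n-k)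
      = pimu v i * ((n.choose k : ℝ) * (k.choose i : ℝ) * y^k * (1-y)^(n-k)) := by
    intro k _; ring
  rw [Finset.sum_congr rfl e2, ← Finset.mul_sum, innerSumLem n i (by omega) y]
  ring

lemma parity_sum (v : ℝ) (n : ℕ) (f : ℕ → ℝ) :
    ∑ i ∈ range (n+1), f i * pimu v i = ∑ j ∈ range (n/2+1), f (2*j) * pimu v (2*j) := by
  have himg : ∑ j ∈ range (n/2+1), f (2*j) * pimu v (2*j)
      = ∑ i ∈ (range (n/2+1)).image (fun j => 2*j), f i * pimu v i := by
    rw [Finset.sum_image]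
    intro a _ b _ h; simp only at h; omega
  rw [himg]
  apply (Finset.sum_subset _ _).symm
  · intro i hi
    rw [Finset.mem_image] at hi
    obtain ⟨j, hj, rfl⟩ := hi
    rw [Finset.mem_range] at hj ⊢
    omega
  · intro i hi hni
    rw [Finset.mem_range] at hi
    rw [Finset.mem_image] at hni
    rcases Nat.even_or_odd i with he | ho
    · exfalso
      obtain ⟨j, rfl⟩ := he
      exact hni ⟨j, Finset.mem_range.2 (by omega), by omega⟩
    · obtain ⟨j, rfl⟩ := ho
      rw [pimu_odd, mul_zero]

lemma piAlg (A B C D P t1 t2 w : ℝ) (hB : B≠0) (hC : C≠0) (ht1 : t1≠0) (ht2 : t2≠0) :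
    P * 2⁻¹ * ((2*t1) * (w * A) / (t1*B*(t1*B))) * (D * (t1*B)/(t2*C))
      = P * (A/(B*B)) * (D*B/C) * w / t2 := by
  field_simp

lemma lhs_coeff (v : ℝ) (hv : v > -1) (k : ℕ) :
    (2:ℝ) ^ (-(k:ℝ)) * gbinom (2*(k:ℝ)+v) ((2*(k:ℝ)+v)/2) * (gbinom ((k:ℝ)+v) (v/2))⁻¹
      = pic v k := by
  induction k with
  | zero =>
    have g1 : Real.Gamma (v+1) ≠ 0 := (Real.Gamma_pos_of_pos (by linarith)).ne'
    have g2 : Real.Gamma (v/2+1) ≠ 0 := (Real.Gamma_pos_of_pos (by linarith)).ne'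
    simp only [Nat.cast_zero, neg_zero, Real.rpow_zero, one_mul, mul_zero, zero_add, pic]
    unfold gbinom
    have g3 : Real.Gamma (v - v/2 + 1) ≠ 0 := by
      rw [show v - v/2+1 = v/2+1 by ring]; exact g2
    exact mul_inv_cancel₀ (div_ne_zero g1 (mul_ne_zero g2 g3))
  | succ k ih =>
    have hk := Nat.cast_nonneg (α := ℝ) k
    have g1 : Real.Gamma (2*(k:ℝ)+v+1) ≠ 0 := (Real.Gamma_pos_of_pos (by linarith)).ne'
    have g2 : Real.Gamma ((k:ℝ)+v/2+1) ≠ 0 := (Real.Gamma_pos_of_pos (by linarith)).ne'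
    have g3 : Real.Gamma ((k:ℝ)+v+1) ≠ 0 := (Real.Gamma_pos_of_pos (by linarith)).ne'
    have g4 : Real.Gamma (v/2+1) ≠ 0 := (Real.Gamma_pos_of_pos (by linarith)).ne'
    unfold gbinom at ih ⊢
    push_cast
    rw [show (2*((k:ℝ)+1)+v)/2+1 = ((k:ℝ)+v/2+1)+1 by ring,
        show 2*((k:ℝ)+1)+v-(2*((k:ℝ)+1)+v)/2+1 = ((k:ℝ)+v/2+1)+1 by ring,
        show 2*((k:ℝ)+1)+v+1 = ((2*(k:ℝ)+v+1)+1)+1 by ring,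
        show (k:ℝ)+1+v+1 = ((k:ℝ)+v+1)+1 by ring,
        show (k:ℝ)+1+v-v/2+1 = ((k:ℝ)+v/2+1)+1 by ring]
    rw [Real.Gamma_add_one (by intro h; linarith : ((k:ℝ)+v/2+1) ≠ 0),
        Real.Gamma_add_one (by intro h; linarith : ((k:ℝ)+v+1) ≠ 0),
        Real.Gamma_add_one (by intro h; linarith : ((2*(k:ℝ)+v+1)+1) ≠ 0),
        Real.Gamma_add_one (by intro h; linarith : (2*(k:ℝ)+v+1) ≠ 0)]
    rw [show (2*(k:ℝ)+v)/2+1 = (k:ℝ)+v/2+1 by ring,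
        show 2*(k:ℝ)+v-(2*(k:ℝ)+v)/2+1 = (k:ℝ)+v/2+1 by ring,
        show (k:ℝ)+v-v/2+1 = (k:ℝ)+v/2+1 by ring] at ih
    have h2p : (2:ℝ)^(-((k:ℝ)+1)) = (2:ℝ)^(-(k:ℝ)) * 2⁻¹ := by
      rw [show -((k:ℝ)+1) = -(k:ℝ) + (-1) by ring, Real.rpow_add (by norm_num),
          Real.rpow_neg_one]
    rw [h2p, pic_succ, ← ih]
    have h5 : (k:ℝ)+v/2+1 ≠ 0 := by intro h; linarith
    have h6 : (k:ℝ)+v+1 ≠ 0 := by intro h; linarith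
    have h7 : v+1+(k:ℝ) ≠ 0 := by intro h; linarith
    have h8 : (2:ℝ)^(-(k:ℝ)) ≠ 0 := by positivity
    set A := Real.Gamma (2*(k:ℝ)+v+1) with hA
    set B := Real.Gamma ((k:ℝ)+v/2+1) with hB
    set C := Real.Gamma ((k:ℝ)+v+1) with hC
    set D := Real.Gamma (v/2+1) with hD
    set P := (2:ℝ)^(-(k:ℝ)) with hP
    rw [inv_div, inv_div]
    rw [show 2*(k:ℝ)+v+1+1 = 2*((k:ℝ)+v/2+1) by ring,
        show v+1+2*(k:ℝ) = 2*(k:ℝ)+v+1 by ring,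
        show v+1+(k:ℝ) = (k:ℝ)+v+1 by ring]
    exact piAlg A B C D P ((k:ℝ)+v/2+1) ((k:ℝ)+v+1) (2*(k:ℝ)+v+1) g2 g3 h5 h6

lemma piAlg2 (B D G P N M t s : ℝ) (hB : B≠0) (hD : D≠0) (hG : G≠0) (ht : t≠0) (hs : s+1≠0)
    (hM : M*((s+1)*(s+1)) = (2*s+2)*(2*s+1)*N) :
    P*4⁻¹*M*((t*B)/((s+1)*G*D))⁻¹ = (2*s+1)/(2*t) * (P*N*(B/(G*D))⁻¹) := by
  rw [inv_div, inv_div]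
  have hM' : M = (2*s+2)*(2*s+1)*N/((s+1)*(s+1)) := by
    field_simp
    apply mul_right_cancel₀ hs
    linear_combination hM
  rw [hM']
  field_simp
  ring

lemma choose_rel (k : ℕ) : (((2*k+2).choose (k+1) : ℕ) : ℝ) * (((k:ℝ)+1)*((k:ℝ)+1))
    = (2*(k:ℝ)+2)*(2*(k:ℝ)+1) * (((2*k).choose k : ℕ) : ℝ) := by
  have h1 := Nat.choose_mul_factorial_mul_factorial (show k+1 ≤ 2*k+2 by omega)
  have h2 := Nat.choose_mul_factorial_mul_factorial (show k ≤ 2*k by omega)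
  rw [show 2*k+2-(k+1) = k+1 by omega] at h1
  rw [show 2*k-k = k by omega] at h2
  have c1 : (((2*k+2).choose (k+1) : ℕ):ℝ) * ((k+1).factorial : ℕ) * ((k+1).factorial : ℕ)
      = (((2*k+2).factorial : ℕ) : ℝ) := by
    exact_mod_cast congrArg (fun m : ℕ => (m:ℝ)) h1
  have c2 : (((2*k).choose k : ℕ):ℝ) * ((k.factorial : ℕ):ℝ) * ((k.factorial : ℕ):ℝ)
      = (((2*k).factorial : ℕ) : ℝ) := by
    exact_mod_cast congrArg (fun m : ℕ => (m:ℝ)) h2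
  have f1 : (((2*k+2).factorial : ℕ) : ℝ)
      = (2*(k:ℝ)+2)*((2*(k:ℝ)+1) * (((2*k).factorial : ℕ) : ℝ)) := by
    rw [show 2*k+2 = (2*k+1)+1 by omega, Nat.factorial_succ, show 2*k+1 = (2*k)+1 from rfl,
        Nat.factorial_succ]
    push_cast; ring
  have f2 : (((k+1).factorial : ℕ) : ℝ) = ((k:ℝ)+1)*((k.factorial : ℕ):ℝ) := by
    rw [Nat.factorial_succ]; push_cast; ring
  have hb : ((k.factorial : ℕ):ℝ) ≠ 0 := by positivity
  apply mul_right_cancel₀ (mul_ne_zero hb hb)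
  rw [f2] at c1
  rw [f1] at c1
  linear_combination c1 - (2*(k:ℝ)+2)*(2*(k:ℝ)+1) * c2

lemma rhs_coeff (v : ℝ) (hv : v > -1) (k : ℕ) :
    (2:ℝ) ^ (-2*(k:ℝ)) * (((2*k).choose k : ℕ) : ℝ) * (gbinom ((2*(k:ℝ)+v)/2) (k:ℝ))⁻¹
      = pimu v (2*k) := by
  induction k with
  | zero =>
    have g2 : Real.Gamma (v/2+1) ≠ 0 := (Real.Gamma_pos_of_pos (by linarith)).ne'
    simp only [Nat.cast_zero, mul_zero, neg_zero, Real.rpow_zero, one_mul, Nat.choose_self,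
      Nat.cast_one, zero_add, Nat.mul_zero]
    have h : gbinom (v/2) 0 = 1 := by
      unfold gbinom
      rw [show (0:ℝ)+1 = 1 by ring, show v/2-0+1 = v/2+1 by ring, Real.Gamma_one, one_mul,
          div_self g2]
    rw [h, inv_one]
    rfl
  | succ k ih =>
    have hk := Nat.cast_nonneg (α := ℝ) k
    have g2 : Real.Gamma ((k:ℝ)+v/2+1) ≠ 0 := (Real.Gamma_pos_of_pos (by linarith)).ne'
    have g4 : Real.Gamma (v/2+1) ≠ 0 := (Real.Gamma_pos_of_pos (by linarith)).ne'
    have g5 : Real.Gamma ((k:ℝ)+1) ≠ 0 := (Real.Gamma_pos_of_pos (by linarith)).ne'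
    have hmu : pimu v (2*(k+1)) = (2*(k:ℝ)+1)/(2*((k:ℝ)+v/2+1)) * pimu v (2*k) := by
      have e : 2*(k+1) = (2*k)+2 := by omega
      rw [e]
      show (((2*k:ℕ):ℝ)+1)/(v+((2*k:ℕ):ℝ)+2) * pimu v (2*k) = _
      push_cast
      rw [show v+2*(k:ℝ)+2 = 2*((k:ℝ)+v/2+1) by ring]
    rw [hmu, ← ih]
    unfold gbinom
    push_cast
    rw [show (2*((k:ℝ)+1)+v)/2+1 = ((k:ℝ)+v/2+1)+1 by ring,
        show (2*((k:ℝ)+1)+v)/2-((k:ℝ)+1)+1 = v/2+1 by ring,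
        show (2*(k:ℝ)+v)/2+1 = (k:ℝ)+v/2+1 by ring,
        show (2*(k:ℝ)+v)/2-(k:ℝ)+1 = v/2+1 by ring,
        show (k:ℝ)+1+1 = ((k:ℝ)+1)+1 by ring]
    rw [Real.Gamma_add_one (by intro h; linarith : ((k:ℝ)+v/2+1) ≠ 0),
        Real.Gamma_add_one (by intro h; linarith : ((k:ℝ)+1) ≠ 0)]
    have h2p : (2:ℝ)^(-2*((k:ℝ)+1)) = (2:ℝ)^(-2*(k:ℝ)) * 4⁻¹ := by
      have h4 : (2:ℝ)^(-(2:ℝ)) = 4⁻¹ := by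
        rw [show (-(2:ℝ)) = ((-2 : ℤ) : ℝ) by norm_num, Real.rpow_intCast]
        norm_num
      rw [show -2*((k:ℝ)+1) = -2*(k:ℝ) + (-2) by ring, Real.rpow_add (by norm_num), h4]
    rw [h2p]
    have hc := choose_rel k
    rw [show 2*(k+1) = 2*k+2 by omega]
    exact piAlg2 (Real.Gamma ((k:ℝ)+v/2+1)) (Real.Gamma (v/2+1)) (Real.Gamma ((k:ℝ)+1))
      ((2:ℝ)^(-2*(k:ℝ))) (((2*k).choose k : ℕ) : ℝ) (((2*k+2).choose (k+1) : ℕ) : ℝ)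
      ((k:ℝ)+v/2+1) (k:ℝ) g2 g4 g5 (by intro h; linarith) (by intro h; linarith) hc

end Aux

theorem polynomial_identity_one_sub_x (n : ℕ) (v : ℝ) (hv : v > -1) (x : ℝ) :
    ∑ k ∈ Finset.range (n + 1),
      (n.choose k : ℝ) * (2 : ℝ) ^ (-(k : ℝ)) *
        gbinom (2 * (k : ℝ) + v) ((2 * (k : ℝ) + v) / 2) *
        (gbinom ((k : ℝ) + v) (v / 2))⁻¹ * (1 - x) ^ k * x ^ (n - k)
    = ∑ k ∈ Finset.range (n / 2 + 1),
        (n.choose (2 * k) : ℝ) * (2 : ℝ) ^ (-2 * (k : ℝ)) * ((2 * k).choose k : ℝ) *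
          (gbinom ((2 * (k : ℝ) + v) / 2) (k : ℝ))⁻¹ * (1 - x) ^ (2 * k) := by
  have step1 : ∑ k ∈ Finset.range (n + 1),
      (n.choose k : ℝ) * (2 : ℝ) ^ (-(k : ℝ)) *
        gbinom (2 * (k : ℝ) + v) ((2 * (k : ℝ) + v) / 2) *
        (gbinom ((k : ℝ) + v) (v / 2))⁻¹ * (1 - x) ^ k * x ^ (n - k)
      = ∑ k ∈ Finset.range (n + 1),
        (n.choose k : ℝ) * pic v k * (1-x) ^ k * (1-(1-x)) ^ (n - k) := by
    apply Finset.sum_congr rfl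
    intro k _
    rw [show (1:ℝ)-(1-x) = x by ring, ← lhs_coeff v hv k]
    ring
  have step2 := swap_sum v hv n (1-x)
  have step3 : ∑ i ∈ Finset.range (n + 1), (n.choose i : ℝ) * pimu v i * (1-x) ^ i
      = ∑ j ∈ Finset.range (n/2 + 1), (n.choose (2*j) : ℝ) * pimu v (2*j) * (1-x) ^ (2*j) := by
    have h := parity_sum v n (fun i => (n.choose i : ℝ) * (1-x) ^ i)
    calc ∑ i ∈ Finset.range (n + 1), (n.choose i : ℝ) * pimu v i * (1-x) ^ i
        = ∑ i ∈ Finset.range (n + 1), (fun i => (n.choose i : ℝ) * (1-x) ^ i) i * pimu v i := by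
          apply Finset.sum_congr rfl; intro i _; ring
      _ = ∑ j ∈ Finset.range (n/2 + 1),
            (fun i => (n.choose i : ℝ) * (1-x) ^ i) (2*j) * pimu v (2*j) := h
      _ = ∑ j ∈ Finset.range (n/2 + 1), (n.choose (2*j) : ℝ) * pimu v (2*j) * (1-x) ^ (2*j) := by
          apply Finset.sum_congr rfl; intro j _; ring
  have step4 : ∑ j ∈ Finset.range (n/2 + 1), (n.choose (2*j) : ℝ) * pimu v (2*j) * (1-x) ^ (2*j)
      = ∑ k ∈ Finset.range (n / 2 + 1),
        (n.choose (2 * k) : ℝ) * (2 : ℝ) ^ (-2 * (k : ℝ)) * ((2 * k).choose k : ℝ) *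
          (gbinom ((2 * (k : ℝ) + v) / 2) (k : ℝ))⁻¹ * (1 - x) ^ (2 * k) := by
    apply Finset.sum_congr rfl
    intro k _
    rw [← rhs_coeff v hv k]
    ring
  rw [step1, step2, step3, step4]
end

section
/- Let n be a nonnegative integer, let u > −1 and v > −1 be real numbers, and let x be a real number. Then B(v, v/2) · ∑_{k=0}^{n} (−1)^{n−k} · C(n,k) · 2^{−2k} · B(2k+u, (2k+u)/2) · B((2k+u+v)/2, v/2)^{−1} · (1−x)^{n−k} = B(u, u/2) · ∑_{k=0}^{n} (−1)^k · C(n,k) · 2^{−2k} · B(2k+v, (2k+v)/2) · B((2k+u+v)/2, u/2)^{−1} · x^{n−k}. -/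
open Real

section Aux

open MeasureTheory intervalIntegral

private lemma ofReal_integrand (a b : ℝ) (x : ℝ) (hx0 : 0 ≤ x) (hx1 : x ≤ 1) :
    ((x:ℂ) ^ ((a:ℂ)-1) * ((1:ℂ)-(x:ℂ)) ^ ((b:ℂ)-1)) = ((x ^ (a-1) * (1-x) ^ (b-1) : ℝ) : ℂ) := by
  rw [show ((a:ℂ)-1) = ((a-1 : ℝ) : ℂ) by push_cast; ring,
      show ((1:ℂ)-(x:ℂ)) = ((1-x : ℝ) : ℂ) by push_cast; ring,
      show ((b:ℂ)-1) = ((b-1 : ℝ) : ℂ) by push_cast; ring,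
      ← Complex.ofReal_cpow hx0, ← Complex.ofReal_cpow (by linarith), Complex.ofReal_mul]

private lemma betaInt_integrable {a b : ℝ} (ha : 0 < a) (hb : 0 < b) :
    IntervalIntegrable (fun t : ℝ => t ^ (a-1) * (1-t) ^ (b-1)) volume 0 1 := by
  have hc := Complex.betaIntegral_convergent (u := (a:ℂ)) (v := (b:ℂ)) (by simpa) (by simpa)
  have hre : IntervalIntegrable
      (fun t : ℝ => ((t:ℂ) ^ ((a:ℂ)-1) * ((1:ℂ)-(t:ℂ)) ^ ((b:ℂ)-1)).re) volume 0 1 :=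
    ⟨hc.1.re, hc.2.re⟩
  apply hre.congr
  intro t ht
  beta_reduce
  rw [Set.uIoc_of_le zero_le_one] at ht
  rw [ofReal_integrand a b t ht.1.le ht.2, Complex.ofReal_re]

private lemma betaInt_eq {a b : ℝ} (ha : 0 < a) (hb : 0 < b) :
    Real.Gamma a * Real.Gamma b
      = Real.Gamma (a+b) * ∫ t in (0:ℝ)..1, t ^ (a-1) * (1-t) ^ (b-1) := by
  have hc := Complex.Gamma_mul_Gamma_eq_betaIntegral (s := (a:ℂ)) (t := (b:ℂ))
    (by simpa) (by simpa)
  rw [Complex.betaIntegral] at hc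
  have : (∫ t in (0:ℝ)..1, (t:ℂ) ^ ((a:ℂ)-1) * ((1:ℂ)-(t:ℂ)) ^ ((b:ℂ)-1))
      = ((∫ t in (0:ℝ)..1, t ^ (a-1) * (1-t) ^ (b-1) : ℝ) : ℂ) := by
    rw [← intervalIntegral.integral_ofReal]
    apply intervalIntegral.integral_congr
    intro t ht
    rw [Set.uIcc_of_le zero_le_one] at ht
    exact ofReal_integrand a b t ht.1 ht.2
  rw [this] at hc
  have := hc
  rw [← Complex.ofReal_add, Complex.Gamma_ofReal, Complex.Gamma_ofReal, Complex.Gamma_ofReal,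
    ← Complex.ofReal_mul, ← Complex.ofReal_mul] at this
  exact_mod_cast this

private lemma key_sum (n : ℕ) (a b : ℝ) (ha : 0 < a) (hb : 0 < b) (x : ℝ) :
    ∑ k ∈ Finset.range (n+1), (-1:ℝ)^(n-k) * (n.choose k : ℝ) *
        (Real.Gamma ((k:ℝ)+a) * Real.Gamma b / Real.Gamma ((k:ℝ)+a+b)) * (1-x)^(n-k)
  = ∑ k ∈ Finset.range (n+1), (-1:ℝ)^k * (n.choose k : ℝ) *
        (Real.Gamma a * Real.Gamma ((k:ℝ)+b) / Real.Gamma ((k:ℝ)+a+b)) * x^(n-k) := by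
  have hka : ∀ k : ℕ, (0:ℝ) < (k:ℝ) + a := fun k => by positivity
  have hkb : ∀ k : ℕ, (0:ℝ) < (k:ℝ) + b := fun k => by positivity
  have hab : ∀ k : ℕ, (0:ℝ) < (k:ℝ) + a + b := fun k => by positivity
  have hL : ∀ k : ℕ, Real.Gamma ((k:ℝ)+a) * Real.Gamma b / Real.Gamma ((k:ℝ)+a+b)
      = ∫ t in (0:ℝ)..1, t ^ ((k:ℝ)+a-1) * (1-t) ^ (b-1) := by
    intro k
    rw [betaInt_eq (hka k) hb,
      mul_div_cancel_left₀ _ (Real.Gamma_pos_of_pos (hab k)).ne']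
  have hR : ∀ k : ℕ, Real.Gamma a * Real.Gamma ((k:ℝ)+b) / Real.Gamma ((k:ℝ)+a+b)
      = ∫ t in (0:ℝ)..1, t ^ (a-1) * (1-t) ^ ((k:ℝ)+b-1) := by
    intro k
    rw [betaInt_eq ha (hkb k), show a + ((k:ℝ)+b) = (k:ℝ)+a+b by ring,
      mul_div_cancel_left₀ _ (Real.Gamma_pos_of_pos (hab k)).ne']
  calc
    ∑ k ∈ Finset.range (n+1), (-1:ℝ)^(n-k) * (n.choose k : ℝ) *
        (Real.Gamma ((k:ℝ)+a) * Real.Gamma b / Real.Gamma ((k:ℝ)+a+b)) * (1-x)^(n-k)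
      = ∑ k ∈ Finset.range (n+1), ∫ t in (0:ℝ)..1,
          ((-1:ℝ)^(n-k) * (n.choose k : ℝ) * (1-x)^(n-k)) *
            (t ^ ((k:ℝ)+a-1) * (1-t) ^ (b-1)) := by
        refine Finset.sum_congr rfl fun k _ => ?_
        rw [hL k, intervalIntegral.integral_const_mul]; ring
    _ = ∫ t in (0:ℝ)..1, ∑ k ∈ Finset.range (n+1),
          ((-1:ℝ)^(n-k) * (n.choose k : ℝ) * (1-x)^(n-k)) *
            (t ^ ((k:ℝ)+a-1) * (1-t) ^ (b-1)) := by
        rw [intervalIntegral.integral_finset_sum]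
        exact fun k _ => (betaInt_integrable (hka k) hb).const_mul _
    _ = ∫ t in (0:ℝ)..1, ∑ k ∈ Finset.range (n+1),
          ((-1:ℝ)^k * (n.choose k : ℝ) * x^(n-k)) *
            (t ^ (a-1) * (1-t) ^ ((k:ℝ)+b-1)) := by
        apply intervalIntegral.integral_congr_ae
        have h1 : ∀ᵐ t : ℝ ∂volume, t ≠ 1 :=
          ae_iff.mpr (by simp)
        filter_upwards [h1] with t ht1 ht
        rw [Set.uIoc_of_le zero_le_one] at ht
        have ht0 : 0 < t := ht.1
        have ht1' : 0 < 1 - t := by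
          rcases lt_or_eq_of_le ht.2 with h | h
          · linarith
          · exact absurd h ht1
        have e1 : ∀ k : ℕ, t ^ ((k:ℝ)+a-1) = t ^ k * t ^ (a-1) := by
          intro k
          rw [show (k:ℝ)+a-1 = (k:ℝ) + (a-1) by ring, Real.rpow_add ht0,
            Real.rpow_natCast]
        have e2 : ∀ k : ℕ, (1-t) ^ ((k:ℝ)+b-1) = (1-t) ^ k * (1-t) ^ (b-1) := by
          intro k
          rw [show (k:ℝ)+b-1 = (k:ℝ) + (b-1) by ring, Real.rpow_add ht1',
            Real.rpow_natCast]
        have lhs_eq : ∑ k ∈ Finset.range (n+1),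
            ((-1:ℝ)^(n-k) * (n.choose k : ℝ) * (1-x)^(n-k)) *
              (t ^ ((k:ℝ)+a-1) * (1-t) ^ (b-1))
            = (t ^ (a-1) * (1-t) ^ (b-1)) * (t - (1-x))^n := by
          rw [show t - (1-x) = t + (-(1-x)) by ring,
            add_pow t (-(1-x)) n, Finset.mul_sum]
          refine Finset.sum_congr rfl fun k _ => ?_
          rw [e1 k, show (-(1-x))^(n-k) = (-1:ℝ)^(n-k) * (1-x)^(n-k) from neg_pow _ _]
          ring
        have rhs_eq : ∑ k ∈ Finset.range (n+1),
            ((-1:ℝ)^k * (n.choose k : ℝ) * x^(n-k)) *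
              (t ^ (a-1) * (1-t) ^ ((k:ℝ)+b-1))
            = (t ^ (a-1) * (1-t) ^ (b-1)) * (x - (1-t))^n := by
          rw [show x - (1-t) = (-(1-t)) + x by ring,
            add_pow (-(1-t)) x n, Finset.mul_sum]
          refine Finset.sum_congr rfl fun k _ => ?_
          rw [e2 k, show (-(1-t))^k = (-1:ℝ)^k * (1-t)^k from neg_pow _ _]
          ring
        rw [lhs_eq, rhs_eq, show t - (1-x) = x - (1-t) by ring]
    _ = ∑ k ∈ Finset.range (n+1), (-1:ℝ)^k * (n.choose k : ℝ) *
        (Real.Gamma a * Real.Gamma ((k:ℝ)+b) / Real.Gamma ((k:ℝ)+a+b)) * x^(n-k) := by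
        rw [intervalIntegral.integral_finset_sum]
        · refine Finset.sum_congr rfl fun k _ => ?_
          rw [hR k, intervalIntegral.integral_const_mul]; ring
        · exact fun k _ => (betaInt_integrable ha (hkb k)).const_mul _

private lemma reduce (u v : ℝ) (hu : u > -1) (hv : v > -1) (k : ℕ) :
    gbinom v (v / 2) * ((2:ℝ) ^ (-2*(k:ℝ)) * gbinom (2*(k:ℝ)+u) ((2*(k:ℝ)+u)/2) *
      (gbinom ((2*(k:ℝ)+u+v)/2) (v/2))⁻¹)
    = (2:ℝ)^(u+v) / π *
      (Real.Gamma ((k:ℝ)+(u+1)/2) * Real.Gamma ((v+1)/2)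
        / Real.Gamma ((k:ℝ)+(u+1)/2+(v+1)/2)) := by
  have h2 : (0:ℝ) < 2 := two_pos
  have hsπ : (0:ℝ) < √π := Real.sqrt_pos.mpr pi_pos
  have hq : (0:ℝ) < Real.Gamma (v/2+1) := Real.Gamma_pos_of_pos (by linarith)
  have hr : (0:ℝ) < Real.Gamma ((k:ℝ)+u/2+1) := by
    apply Real.Gamma_pos_of_pos
    have : (0:ℝ) ≤ (k:ℝ) := Nat.cast_nonneg k
    linarith
  have hs : (0:ℝ) < Real.Gamma ((k:ℝ)+(u+1)/2+(v+1)/2) := by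
    apply Real.Gamma_pos_of_pos
    have : (0:ℝ) ≤ (k:ℝ) := Nat.cast_nonneg k
    linarith
  have dup_v : Real.Gamma ((v+1)/2) * Real.Gamma (v/2+1)
      = Real.Gamma (v+1) * ((2:ℝ)^v)⁻¹ * √π := by
    have h := Real.Gamma_mul_Gamma_add_half ((v+1)/2)
    rw [show (v+1)/2+1/2 = v/2+1 by ring, show 2*((v+1)/2) = v+1 by ring,
      show 1-(v+1) = -v by ring, Real.rpow_neg h2.le] at h
    exact h
  have hΓv : Real.Gamma (v+1)
      = Real.Gamma ((v+1)/2) * Real.Gamma (v/2+1) * (2:ℝ)^v / √π := by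
    rw [eq_div_iff hsπ.ne', dup_v]
    field_simp
  have dup_k : Real.Gamma ((k:ℝ)+(u+1)/2) * Real.Gamma ((k:ℝ)+u/2+1)
      = Real.Gamma (2*(k:ℝ)+u+1) * ((2:ℝ)^(2*(k:ℝ)) * (2:ℝ)^u)⁻¹ * √π := by
    have h := Real.Gamma_mul_Gamma_add_half ((k:ℝ)+(u+1)/2)
    rw [show (k:ℝ)+(u+1)/2+1/2 = (k:ℝ)+u/2+1 by ring,
      show 2*((k:ℝ)+(u+1)/2) = 2*(k:ℝ)+u+1 by ring,
      show 1-(2*(k:ℝ)+u+1) = -(2*(k:ℝ)) + -u by ring,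
      Real.rpow_add h2, Real.rpow_neg h2.le, Real.rpow_neg h2.le,
      ← mul_inv] at h
    exact h
  have hΓk : Real.Gamma (2*(k:ℝ)+u+1)
      = Real.Gamma ((k:ℝ)+(u+1)/2) * Real.Gamma ((k:ℝ)+u/2+1)
          * ((2:ℝ)^(2*(k:ℝ)) * (2:ℝ)^u) / √π := by
    rw [eq_div_iff hsπ.ne', dup_k]
    have : ((2:ℝ)^(2*(k:ℝ)) * (2:ℝ)^u) ≠ 0 := by positivity
    field_simp
  rw [show (2:ℝ)^(u+v)/π = (2:ℝ)^u*(2:ℝ)^v/(√π*√π) by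
        rw [Real.rpow_add h2, Real.mul_self_sqrt pi_pos.le],
    gbinom, gbinom, gbinom,
    show v - v/2 + 1 = v/2+1 by ring,
    show (2*(k:ℝ)+u)/2 + 1 = (k:ℝ)+u/2+1 by ring,
    show (2*(k:ℝ)+u) - (2*(k:ℝ)+u)/2 + 1 = (k:ℝ)+u/2+1 by ring,
    show (2*(k:ℝ)+u+v)/2 + 1 = (k:ℝ)+(u+1)/2+(v+1)/2 by ring,
    show (2*(k:ℝ)+u+v)/2 - v/2 + 1 = (k:ℝ)+u/2+1 by ring,
    hΓv, hΓk,
    show -2*(k:ℝ) = -(2*(k:ℝ)) by ring, Real.rpow_neg h2.le]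
  have h2k : (0:ℝ) < (2:ℝ)^(2*(k:ℝ)) := by positivity
  have h2u : (0:ℝ) < (2:ℝ)^u := by positivity
  have h2v : (0:ℝ) < (2:ℝ)^v := by positivity
  set sπ := √π with hsd
  set Gq := Real.Gamma (v/2+1)
  set Gr := Real.Gamma ((k:ℝ)+u/2+1)
  set Gs := Real.Gamma ((k:ℝ)+(u+1)/2+(v+1)/2)
  field_simp

end Aux

theorem polynomial_identity_uv_symmetric (n : ℕ) (u v : ℝ) (hu : u > -1) (hv : v > -1)
    (x : ℝ) :
    gbinom v (v / 2) *
      ∑ k ∈ Finset.range (n + 1),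
        (-1 : ℝ) ^ (n - k) * (n.choose k : ℝ) * (2 : ℝ) ^ (-2 * (k : ℝ)) *
          gbinom (2 * (k : ℝ) + u) ((2 * (k : ℝ) + u) / 2) *
          (gbinom ((2 * (k : ℝ) + u + v) / 2) (v / 2))⁻¹ * (1 - x) ^ (n - k)
    = gbinom u (u / 2) *
        ∑ k ∈ Finset.range (n + 1),
          (-1 : ℝ) ^ k * (n.choose k : ℝ) * (2 : ℝ) ^ (-2 * (k : ℝ)) *
            gbinom (2 * (k : ℝ) + v) ((2 * (k : ℝ) + v) / 2) *
            (gbinom ((2 * (k : ℝ) + u + v) / 2) (u / 2))⁻¹ * x ^ (n - k) := by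
  have ha : (0:ℝ) < (u+1)/2 := by linarith
  have hb : (0:ℝ) < (v+1)/2 := by linarith
  have hLk : ∀ k : ℕ, gbinom v (v / 2) *
        ((-1 : ℝ) ^ (n - k) * (n.choose k : ℝ) * (2 : ℝ) ^ (-2 * (k : ℝ)) *
          gbinom (2 * (k : ℝ) + u) ((2 * (k : ℝ) + u) / 2) *
          (gbinom ((2 * (k : ℝ) + u + v) / 2) (v / 2))⁻¹ * (1 - x) ^ (n - k))
      = (2:ℝ)^(u+v)/π * ((-1:ℝ)^(n-k) * (n.choose k : ℝ) *
          (Real.Gamma ((k:ℝ)+(u+1)/2) * Real.Gamma ((v+1)/2)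
            / Real.Gamma ((k:ℝ)+(u+1)/2+(v+1)/2)) * (1-x)^(n-k)) := by
    intro k
    have h := reduce u v hu hv k
    calc gbinom v (v / 2) *
        ((-1 : ℝ) ^ (n - k) * (n.choose k : ℝ) * (2 : ℝ) ^ (-2 * (k : ℝ)) *
          gbinom (2 * (k : ℝ) + u) ((2 * (k : ℝ) + u) / 2) *
          (gbinom ((2 * (k : ℝ) + u + v) / 2) (v / 2))⁻¹ * (1 - x) ^ (n - k))
        = ((-1:ℝ)^(n-k) * (n.choose k : ℝ) * (1-x)^(n-k)) *
            (gbinom v (v / 2) * ((2:ℝ) ^ (-2*(k:ℝ)) *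
              gbinom (2*(k:ℝ)+u) ((2*(k:ℝ)+u)/2) *
              (gbinom ((2*(k:ℝ)+u+v)/2) (v/2))⁻¹)) := by ring
      _ = _ := by rw [h]; ring
  have hRk : ∀ k : ℕ, gbinom u (u / 2) *
        ((-1 : ℝ) ^ k * (n.choose k : ℝ) * (2 : ℝ) ^ (-2 * (k : ℝ)) *
          gbinom (2 * (k : ℝ) + v) ((2 * (k : ℝ) + v) / 2) *
          (gbinom ((2 * (k : ℝ) + u + v) / 2) (u / 2))⁻¹ * x ^ (n - k))
      = (2:ℝ)^(u+v)/π * ((-1:ℝ)^k * (n.choose k : ℝ) *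
          (Real.Gamma ((u+1)/2) * Real.Gamma ((k:ℝ)+(v+1)/2)
            / Real.Gamma ((k:ℝ)+(u+1)/2+(v+1)/2)) * x^(n-k)) := by
    intro k
    have h := reduce v u hv hu k
    rw [show (2 * (k:ℝ) + u + v)/2 = (2 * (k:ℝ) + v + u)/2 by ring]
    calc gbinom u (u / 2) *
        ((-1 : ℝ) ^ k * (n.choose k : ℝ) * (2 : ℝ) ^ (-2 * (k : ℝ)) *
          gbinom (2 * (k : ℝ) + v) ((2 * (k : ℝ) + v) / 2) *
          (gbinom ((2 * (k : ℝ) + v + u) / 2) (u / 2))⁻¹ * x ^ (n - k))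
        = ((-1:ℝ)^k * (n.choose k : ℝ) * x^(n-k)) *
            (gbinom u (u / 2) * ((2:ℝ) ^ (-2*(k:ℝ)) *
              gbinom (2*(k:ℝ)+v) ((2*(k:ℝ)+v)/2) *
              (gbinom ((2*(k:ℝ)+v+u)/2) (u/2))⁻¹)) := by ring
      _ = _ := by
          rw [h, show v + u = u + v by ring,
            show (k:ℝ)+(v+1)/2+(u+1)/2 = (k:ℝ)+(u+1)/2+(v+1)/2 by ring]
          ring
  rw [Finset.mul_sum, Finset.mul_sum,
    Finset.sum_congr rfl (fun k _ => hLk k), Finset.sum_congr rfl (fun k _ => hRk k),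
    ← Finset.mul_sum, ← Finset.mul_sum, key_sum n ((u+1)/2) ((v+1)/2) ha hb x]
end

section
/- Let n be a positive integer and let v > −1 be a real number. Then ∑_{k=0}^{⌊n/2⌋} (−1)^k · (n/(n−k)) · C(n−k, k) · 2^{−4k} · B(2k+v, (2k+v)/2) = B(2n+v, (2n+v)/2) · B(v, v/2) · 2^{1−2n} · B(n+v, v/2)^{−1}. -/
open Real

section Aux
open Finset

noncomputable def cc (n k : ℕ) : ℝ :=
  (-1 : ℝ) ^ k * ((n : ℝ) / ((n : ℝ) - (k : ℝ))) * ((n - k).choose k : ℝ)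

lemma choose_id (j k : ℕ) :
    ((k:ℝ)+1) * ((j+1).choose (k+1) : ℝ) = ((j:ℝ)+1-k) * ((j+1).choose k : ℝ) := by
  rcases le_or_gt k (j+1) with h|h
  · have h0 := Nat.choose_succ_right_eq (j+1) k
    have h1 : ((j+1) - k : ℕ) = ((j:ℝ)+1-(k:ℝ)) := by
      push_cast [Nat.cast_sub h]; ring
    have h2 := congrArg (Nat.cast (R := ℝ)) h0
    push_cast at h2
    rw [h1] at h2
    linarith
  · rw [Nat.choose_eq_zero_of_lt (by omega), Nat.choose_eq_zero_of_lt (by omega)]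
    simp

lemma cc_rec (m k : ℕ) (hm : 1 ≤ m) : cc (m+2) (k+1) = cc (m+1) (k+1) - cc m k := by
  rcases Nat.lt_or_ge k m with h | h
  · obtain ⟨j, rfl⟩ : ∃ j, m = k + j + 1 := ⟨m - k - 1, by omega⟩
    unfold cc
    have e1 : (k + j + 1 + 2) - (k+1) = j + 2 := by omega
    have e2 : (k + j + 1 + 1) - (k+1) = j + 1 := by omega
    have e3 : (k + j + 1) - k = j + 1 := by omega
    rw [e1, e2, e3]
    have pascal : ((j+2).choose (k+1) : ℝ) = ((j+1).choose k : ℝ) + ((j+1).choose (k+1) : ℝ) := by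
      have := Nat.choose_succ_succ (j+1) k
      push_cast [this]; ring
    have cid := choose_id j k
    push_cast
    have hj : (0:ℝ) ≤ (j:ℝ) := Nat.cast_nonneg j
    have d1 : (k:ℝ) + (j:ℝ) + 1 + 2 - ((k:ℝ)+1) ≠ 0 := by intro hc; nlinarith
    have d2 : (k:ℝ) + (j:ℝ) + 1 + 1 - ((k:ℝ)+1) ≠ 0 := by intro hc; nlinarith
    have d3 : (k:ℝ) + (j:ℝ) + 1 - (k:ℝ) ≠ 0 := by intro hc; nlinarith
    field_simp
    linear_combination ((-1:ℝ))^k * (-(((j:ℝ)+1)^2*((k:ℝ)+(j:ℝ)+3))) * pascal + ((-1:ℝ))^k * ((j:ℝ)+1) * cid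
  · unfold cc
    rw [Nat.choose_eq_zero_of_lt (show (m+2) - (k+1) < k+1 by omega),
        Nat.choose_eq_zero_of_lt (show (m+1) - (k+1) < k+1 by omega),
        Nat.choose_eq_zero_of_lt (show m - k < k by omega)]
    simp

lemma cc_zero {n k : ℕ} (h : n < 2*k) : cc n k = 0 := by
  unfold cc
  rw [Nat.choose_eq_zero_of_lt (by omega)]
  simp

lemma cc_zero' (n : ℕ) (hn : 1 ≤ n) : cc n 0 = 1 := by
  unfold cc
  have : (n:ℝ) ≠ 0 := by positivity
  simp [div_self this]

noncomputable def gg (a : ℝ) (k : ℕ) : ℝ :=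
  Real.Gamma ((k:ℝ) + a + 1/2) / Real.Gamma ((k:ℝ) + a + 1)

lemma gg_shift (a : ℝ) (k : ℕ) : gg a (k+1) = gg (a+1) k := by
  unfold gg
  push_cast
  ring_nf

noncomputable def S (a : ℝ) (n : ℕ) : ℝ :=
  ∑ k ∈ Finset.range (n+1), cc n k * (4:ℝ)⁻¹^k * gg a k

noncomputable def F (a : ℝ) (n : ℕ) : ℝ :=
  2 * Real.Gamma (2*a+1) * Real.Gamma ((n:ℝ) + a + 1/2) /
    (Real.Gamma (a+1) * Real.Gamma ((n:ℝ) + 2*a + 1))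

lemma S_rec (a : ℝ) (m : ℕ) (hm : 1 ≤ m) : S a (m+2) = S a (m+1) - 4⁻¹ * S (a+1) m := by
  unfold S
  rw [Finset.sum_range_succ' (fun k => cc (m+2) k * (4:ℝ)⁻¹^k * gg a k) (m+2)]
  rw [Finset.sum_range_succ' (fun k => cc (m+1) k * (4:ℝ)⁻¹^k * gg a k) (m+1)]
  have hrec : ∀ i ∈ Finset.range (m+2),
      cc (m+2) (i+1) * (4:ℝ)⁻¹^(i+1) * gg a (i+1)
      = cc (m+1) (i+1) * (4:ℝ)⁻¹^(i+1) * gg a (i+1)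
        - 4⁻¹ * (cc m i * (4:ℝ)⁻¹^i * gg (a+1) i) := by
    intro i _
    rw [cc_rec m i hm, ← gg_shift a i]
    ring
  rw [Finset.sum_congr rfl hrec, Finset.sum_sub_distrib]
  rw [Finset.sum_range_succ (fun i => cc (m+1) (i+1) * (4:ℝ)⁻¹^(i+1) * gg a (i+1)) (m+1)]
  rw [Finset.sum_range_succ (fun i => 4⁻¹ * (cc m i * (4:ℝ)⁻¹^i * gg (a+1) i)) (m+1)]
  rw [cc_zero (show m+1 < 2*(m+2) by omega), cc_zero (show m < 2*(m+1) by omega),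
      ← Finset.mul_sum]
  simp only [cc_zero' (m+2) (by omega), cc_zero' (m+1) (by omega)]
  ring

lemma S_one (a : ℝ) : S a 1 = gg a 0 := by
  unfold S
  rw [Finset.sum_range_succ, Finset.sum_range_succ, Finset.sum_range_zero,
      cc_zero (show 1 < 2*1 by omega), cc_zero' 1 (by omega)]
  ring

lemma S_two (a : ℝ) : S a 2 = gg a 0 - 2⁻¹ * gg a 1 := by
  unfold S
  rw [Finset.sum_range_succ, Finset.sum_range_succ, Finset.sum_range_succ,
      Finset.sum_range_zero, cc_zero (show 2 < 2*2 by omega), cc_zero' 2 (by omega)]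
  have : cc 2 1 = -2 := by unfold cc; norm_num
  rw [this]
  ring

lemma F_one (a : ℝ) (ha : -1/2 < a) : F a 1 = gg a 0 := by
  unfold F gg
  push_cast
  have h1 : Real.Gamma (1 + a + 1/2) = (a+1/2) * Real.Gamma (a + 1/2) := by
    rw [show (1:ℝ) + a + 1/2 = (a+1/2)+1 by ring, Real.Gamma_add_one (by linarith)]
  have h2 : Real.Gamma (1 + 2*a + 1) = (2*a+1) * Real.Gamma (2*a + 1) := by
    rw [show (1:ℝ) + 2*a + 1 = (2*a+1)+1 by ring, Real.Gamma_add_one (by linarith)]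
  have h3 : Real.Gamma ((0:ℝ) + a + 1/2) = Real.Gamma (a+1/2) := by norm_num
  have h4 : Real.Gamma ((0:ℝ) + a + 1) = Real.Gamma (a+1) := by norm_num
  rw [h1, h2, h3, h4]
  have p1 : Real.Gamma (a+1) ≠ 0 := ne_of_gt (Real.Gamma_pos_of_pos (by linarith))
  have p2 : Real.Gamma (2*a+1) ≠ 0 := ne_of_gt (Real.Gamma_pos_of_pos (by linarith))
  have p3 : (2*a+1 : ℝ) ≠ 0 := by linarith
  field_simp

lemma F_two (a : ℝ) (ha : -1/2 < a) : F a 2 = gg a 0 - 2⁻¹ * gg a 1 := by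
  unfold F gg
  push_cast
  have pa : Real.Gamma (a+1/2) > 0 := Real.Gamma_pos_of_pos (by linarith)
  have p1 : Real.Gamma (a+1) > 0 := Real.Gamma_pos_of_pos (by linarith)
  have p2 : Real.Gamma (2*a+1) > 0 := Real.Gamma_pos_of_pos (by linarith)
  have h1 : Real.Gamma (2 + a + 1/2) = (a+3/2) * ((a+1/2) * Real.Gamma (a + 1/2)) := by
    rw [show (2:ℝ) + a + 1/2 = (a+3/2)+1 by ring, Real.Gamma_add_one (by linarith),
        show (a:ℝ)+3/2 = (a+1/2)+1 by ring, Real.Gamma_add_one (by linarith)]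
  have h2 : Real.Gamma (2 + 2*a + 1) = (2*a+2) * ((2*a+1) * Real.Gamma (2*a + 1)) := by
    rw [show (2:ℝ) + 2*a + 1 = (2*a+2)+1 by ring, Real.Gamma_add_one (by linarith),
        show (2*a:ℝ)+2 = (2*a+1)+1 by ring, Real.Gamma_add_one (by linarith)]
  have h3 : Real.Gamma ((0:ℝ) + a + 1/2) = Real.Gamma (a+1/2) := by norm_num
  have h4 : Real.Gamma ((0:ℝ) + a + 1) = Real.Gamma (a+1) := by norm_num
  have h5 : Real.Gamma ((1:ℝ) + a + 1/2) = (a+1/2) * Real.Gamma (a+1/2) := by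
    rw [show (1:ℝ) + a + 1/2 = (a+1/2)+1 by ring, Real.Gamma_add_one (by linarith)]
  have h6 : Real.Gamma ((1:ℝ) + a + 1) = (a+1) * Real.Gamma (a+1) := by
    rw [show (1:ℝ) + a + 1 = (a+1)+1 by ring, Real.Gamma_add_one (by linarith)]
  rw [h1, h2, h3, h4, h5, h6]
  have q1 : Real.Gamma (a+1) ≠ 0 := ne_of_gt p1
  have q2 : Real.Gamma (2*a+1) ≠ 0 := ne_of_gt p2
  have q3 : (2*a+1 : ℝ) ≠ 0 := by linarith
  have q4 : (2*a+2 : ℝ) ≠ 0 := by linarith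
  have q5 : (a+1 : ℝ) ≠ 0 := by linarith
  field_simp
  ring

lemma F_rec (a : ℝ) (ha : -1/2 < a) (m : ℕ) :
    F a (m+3) = F a (m+2) - 4⁻¹ * F (a+1) (m+1) := by
  unfold F
  push_cast
  have hm : (0:ℝ) ≤ (m:ℝ) := Nat.cast_nonneg m
  have h1 : Real.Gamma ((m:ℝ) + 3 + a + 1/2)
      = ((m:ℝ)+a+5/2) * Real.Gamma ((m:ℝ) + 2 + a + 1/2) := by
    rw [show (m:ℝ) + 3 + a + 1/2 = ((m:ℝ)+2+a+1/2)+1 by ring,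
        Real.Gamma_add_one (by intro hc; nlinarith)]
    ring
  have h2 : Real.Gamma ((m:ℝ) + 3 + 2*a + 1)
      = ((m:ℝ)+2*a+3) * Real.Gamma ((m:ℝ) + 2 + 2*a + 1) := by
    rw [show (m:ℝ) + 3 + 2*a + 1 = ((m:ℝ)+2+2*a+1)+1 by ring,
        Real.Gamma_add_one (by intro hc; nlinarith)]
    ring
  have h3 : Real.Gamma (2*(a+1)+1) = (2*a+2) * ((2*a+1) * Real.Gamma (2*a+1)) := by
    rw [show 2*(a+1)+1 = (2*a+2)+1 by ring, Real.Gamma_add_one (by linarith),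
        show (2*a:ℝ)+2 = (2*a+1)+1 by ring, Real.Gamma_add_one (by linarith)]
  have h4 : Real.Gamma (a+1+1) = (a+1) * Real.Gamma (a+1) := by
    rw [Real.Gamma_add_one (by linarith)]
  have h5 : Real.Gamma ((m:ℝ) + 1 + (a+1) + 1/2) = Real.Gamma ((m:ℝ) + 2 + a + 1/2) := by
    ring_nf
  have h6 : Real.Gamma ((m:ℝ) + 1 + 2*(a+1) + 1) = Real.Gamma ((m:ℝ) + 2 + 2*a + 1 + 1) := by
    ring_nf
  have h7 : Real.Gamma ((m:ℝ) + 2 + 2*a + 1 + 1) = ((m:ℝ)+2*a+3) * Real.Gamma ((m:ℝ)+2+2*a+1) := by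
    rw [Real.Gamma_add_one (by intro hc; nlinarith)]
    ring
  rw [h1, h2, h3, h4, h5, h6, h7]
  have p1 : Real.Gamma (a+1) ≠ 0 := ne_of_gt (Real.Gamma_pos_of_pos (by linarith))
  have p3 : Real.Gamma ((m:ℝ)+2+2*a+1) ≠ 0 := ne_of_gt (Real.Gamma_pos_of_pos (by nlinarith))
  have q1 : (a+1 : ℝ) ≠ 0 := by linarith
  have q2 : ((m:ℝ)+2*a+3) ≠ 0 := by intro hc; nlinarith
  field_simp
  ring

lemma key : ∀ n : ℕ, ∀ a : ℝ, -1/2 < a → 1 ≤ n → S a n = F a n := by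
  intro n
  induction n using Nat.strong_induction_on with
  | _ n ih =>
    intro a ha hn
    match n, hn with
    | 1, _ => rw [S_one, F_one a ha]
    | 2, _ => rw [S_two, F_two a ha]
    | (m+3), _ =>
      have h1 := ih (m+2) (by omega) a ha (by omega)
      have h2 := ih (m+1) (by omega) (a+1) (by linarith) (by omega)
      rw [show m+3 = (m+1)+2 by omega, S_rec a (m+1) (by omega),
          show (m+1)+1 = m+2 by omega, h1, h2,
          show (m+1)+2 = m+3 by omega, F_rec a ha m]

lemma dup (x : ℝ) : Real.Gamma (x+1/2) * Real.Gamma (x+1) =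
    Real.Gamma (2*x+1) * (2:ℝ)^(-(2*x)) * √π := by
  have h := Real.Gamma_mul_Gamma_add_half (x+1/2)
  rw [show (x+1/2)+1/2 = x+1 by ring] at h
  rw [show 2*(x+1/2) = 2*x+1 by ring] at h
  rw [show 1-(2*x+1) = -(2*x) by ring] at h
  exact h

lemma dup' (x : ℝ) : Real.Gamma (2*x+1) =
    Real.Gamma (x+1/2) * Real.Gamma (x+1) * (2:ℝ)^(2*x) / √π := by
  have h := dup x
  have h2 : (2:ℝ)^(-(2*x)) * (2:ℝ)^(2*x) = 1 := by
    rw [← Real.rpow_add (by norm_num)]; norm_num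
  have hpi : √π ≠ 0 := ne_of_gt (Real.sqrt_pos.mpr Real.pi_pos)
  rw [eq_div_iff hpi, h]
  linear_combination (-(Real.Gamma (2*x+1) * √π)) * h2

lemma gbinom_half (v : ℝ) (hv : v > -1) (k : ℕ) :
    Real.Gamma (2*(k:ℝ)+v+1) / (Real.Gamma ((2*(k:ℝ)+v)/2 + 1) *
      Real.Gamma (2*(k:ℝ)+v - (2*(k:ℝ)+v)/2 + 1))
    = Real.Gamma ((k:ℝ)+v/2+1/2) * (2:ℝ)^(2*(k:ℝ)+v) /
      (√π * Real.Gamma ((k:ℝ)+v/2+1)) := by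
  have hk : (0:ℝ) ≤ (k:ℝ) := Nat.cast_nonneg k
  rw [show (2*(k:ℝ)+v)/2+1 = ((k:ℝ)+v/2)+1 by ring,
      show 2*(k:ℝ)+v-(2*(k:ℝ)+v)/2+1 = ((k:ℝ)+v/2)+1 by ring,
      show 2*(k:ℝ)+v+1 = 2*((k:ℝ)+v/2)+1 by ring,
      dup' ((k:ℝ)+v/2)]
  have hG : Real.Gamma (((k:ℝ)+v/2)+1) ≠ 0 :=
    ne_of_gt (Real.Gamma_pos_of_pos (by linarith))
  have hpi : √π ≠ 0 := ne_of_gt (Real.sqrt_pos.mpr Real.pi_pos)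
  rw [show 2*((k:ℝ)+v/2) = 2*(k:ℝ)+v by ring]
  have hne1 : √π * (Real.Gamma (((k:ℝ)+v/2)+1) * Real.Gamma (((k:ℝ)+v/2)+1)) ≠ 0 :=
    mul_ne_zero hpi (mul_ne_zero hG hG)
  have hne2 : √π * Real.Gamma ((k:ℝ)+v/2+1) ≠ 0 := mul_ne_zero hpi hG
  rw [div_div, div_eq_div_iff hne1 hne2]
  ring

end Aux

theorem waring_combinatorial_identity (n : ℕ) (hn : 0 < n) (v : ℝ) (hv : v > -1) :
    ∑ k ∈ Finset.range (n / 2 + 1),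
      (-1 : ℝ) ^ k * ((n : ℝ) / ((n : ℝ) - (k : ℝ))) * ((n - k).choose k : ℝ) *
        (2 : ℝ) ^ (-4 * (k : ℝ)) * gbinom (2 * (k : ℝ) + v) ((2 * (k : ℝ) + v) / 2)
    = gbinom (2 * (n : ℝ) + v) ((2 * (n : ℝ) + v) / 2) * gbinom v (v / 2) *
        (2 : ℝ) ^ (1 - 2 * (n : ℝ)) * (gbinom ((n : ℝ) + v) (v / 2))⁻¹ := by
  have ha : -(1:ℝ)/2 < v/2 := by linarith
  have hpi : √π ≠ 0 := ne_of_gt (Real.sqrt_pos.mpr Real.pi_pos)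
  have hsub : Finset.range (n/2+1) ⊆ Finset.range (n+1) := Finset.range_subset_range.mpr (by omega)
  rw [Finset.sum_subset hsub (by
    intro k hk hk'
    simp only [Finset.mem_range] at hk hk'
    rw [Nat.choose_eq_zero_of_lt (show n - k < k by omega)]
    simp)]
  have hterm : ∀ k ∈ Finset.range (n+1),
      (-1 : ℝ) ^ k * ((n : ℝ) / ((n : ℝ) - (k : ℝ))) * ((n - k).choose k : ℝ) *
        (2 : ℝ) ^ (-4 * (k : ℝ)) * gbinom (2 * (k : ℝ) + v) ((2 * (k : ℝ) + v) / 2)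
      = (2:ℝ)^v/√π * (cc n k * (4:ℝ)⁻¹^k * gg (v/2) k) := by
    intro k _
    have hk : (0:ℝ) ≤ (k:ℝ) := Nat.cast_nonneg k
    simp only [gbinom]
    rw [gbinom_half v hv k]
    unfold cc gg
    have hG : Real.Gamma ((k:ℝ)+v/2+1) ≠ 0 :=
      ne_of_gt (Real.Gamma_pos_of_pos (by linarith))
    have h0 : ((4:ℝ)⁻¹) = (2:ℝ)^(-2:ℝ) := by
      rw [show (-2:ℝ) = ((-2:ℤ):ℝ) by norm_num, Real.rpow_intCast]; norm_num
    have hpow : (2:ℝ)^(-4*(k:ℝ)) * (2:ℝ)^(2*(k:ℝ)+v) = (2:ℝ)^v * ((4:ℝ)⁻¹)^k := by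
      have h1 : ((4:ℝ)⁻¹)^k = (2:ℝ)^((-2:ℝ)*(k:ℝ)) := by
        rw [h0, ← Real.rpow_natCast ((2:ℝ)^(-2:ℝ)) k, ← Real.rpow_mul (by norm_num)]
      rw [h1, ← Real.rpow_add (by norm_num), ← Real.rpow_add (by norm_num)]
      congr 1
      ring
    set A : ℝ := (-1) ^ k * ((n:ℝ) / ((n:ℝ) - (k:ℝ))) * ((n - k).choose k : ℝ) with hA
    set Ga := Real.Gamma ((k:ℝ)+v/2+1/2) with hGa
    set Gb := Real.Gamma ((k:ℝ)+v/2+1) with hGb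
    set P := (2:ℝ)^(-4*(k:ℝ)) with hP
    set Q := (2:ℝ)^(2*(k:ℝ)+v) with hQ
    set V := (2:ℝ)^v with hV
    have hpow' : P * Q * 4^k = V := by
      rw [hpow]
      have : (4:ℝ)⁻¹^k * 4^k = 1 := by
        rw [← mul_pow]; norm_num
      linear_combination V * this
    field_simp
    linear_combination ((-1 : ℝ) ^ k * ((n:ℝ) / ((n:ℝ) - (k:ℝ))) * ((n - k).choose k : ℝ) * Ga) * hpow
  rw [Finset.sum_congr rfl hterm, ← Finset.mul_sum]
  have hkey : (∑ k ∈ Finset.range (n+1), cc n k * (4:ℝ)⁻¹^k * gg (v/2) k) = F (v/2) n :=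
    key n (v/2) ha hn
  rw [hkey]
  -- RHS computation
  have hn0 : (0:ℝ) ≤ (n:ℝ) := Nat.cast_nonneg n
  simp only [gbinom, F]
  rw [gbinom_half v hv n,
      show v - v/2 + 1 = v/2 + 1 by ring,
      show (n:ℝ) + v - v/2 + 1 = (n:ℝ) + v/2 + 1 by ring,
      show 2*((v:ℝ)/2) + 1 = v + 1 by ring,
      show (n:ℝ) + 2*(v/2) + 1 = (n:ℝ) + v + 1 by ring]
  have hGb2 : Real.Gamma ((n:ℝ)+v/2+1) ≠ 0 :=
    ne_of_gt (Real.Gamma_pos_of_pos (by linarith))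
  have hGc : Real.Gamma (v/2+1) ≠ 0 :=
    ne_of_gt (Real.Gamma_pos_of_pos (by linarith))
  have hGe : Real.Gamma ((n:ℝ)+v+1) ≠ 0 :=
    ne_of_gt (Real.Gamma_pos_of_pos (by linarith))
  set Ga2 := Real.Gamma ((n:ℝ)+v/2+1/2) with hsGa2
  set Gb2 := Real.Gamma ((n:ℝ)+v/2+1) with hsGb2
  set Gc := Real.Gamma (v/2+1) with hsGc
  set Gd := Real.Gamma (v+1) with hsGd
  set Ge := Real.Gamma ((n:ℝ)+v+1) with hsGe
  set Q2 := (2:ℝ)^(2*(n:ℝ)+v) with hsQ2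
  set W := (2:ℝ)^(1-2*(n:ℝ)) with hsW
  set V := (2:ℝ)^v with hsV
  have hpow2 : Q2 * W = 2 * V := by
    rw [hsQ2, hsW, hsV, ← Real.rpow_add (by norm_num),
        show 2*(n:ℝ)+v+(1-2*(n:ℝ)) = v+1 by ring, Real.rpow_add (by norm_num),
        Real.rpow_one]
    ring
  field_simp
  linear_combination (-(Gd * Ga2)) * hpow2
end
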